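/- arXiv:2305.18681 — 4 statements merged into one kernel-verified Lean document; each statement's English description precedes it below -/
import Mathlib

section
/- If X_1,…,X_n are i.i.d., h: ℝ^l → ℝ is a bounded symmetric kernel with E h(X_1,…,X_l) = 0, l divides n, and the U-statistic U_{n,l}(h) admits the Hoeffding representation as an average over permutations of means of n/l i.i.d. terms, then for every t > 0, P(|U_{n,l}(h)| ≥ t) ≤ 2 exp(−(n/l)·t²/(2‖h‖_∞²)). -/
open MeasureTheory ProbabilityTheory Finset Real

section UStatHelpers

variable {Ω : Type*} [MeasurableSpace Ω] {μ : Measure Ω}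

lemma ustat_integrable_exp_mul [IsProbabilityMeasure μ] {Y : Ω → ℝ} (hY : Measurable Y)
    {B : ℝ} (hbd : ∀ ω, |Y ω| ≤ B) (s : ℝ) :
    Integrable (fun ω => Real.exp (s * Y ω)) μ := by
  refine Integrable.mono' (integrable_const (Real.exp (|s| * B)))
    ((Real.measurable_exp.comp (measurable_const.mul hY)).aestronglyMeasurable)
    (ae_of_all _ fun ω => ?_)
  rw [Real.norm_eq_abs, abs_of_pos (Real.exp_pos _)]
  refine Real.exp_le_exp.mpr ?_
  calc s * Y ω ≤ |s * Y ω| := le_abs_self _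
    _ = |s| * |Y ω| := abs_mul _ _
    _ ≤ |s| * B := mul_le_mul_of_nonneg_left (hbd ω) (abs_nonneg s)

lemma ustat_hoeffding_mgf [IsProbabilityMeasure μ] {Y : Ω → ℝ} (hY : Measurable Y)
    {B : ℝ} (hB : 0 < B) (hbd : ∀ ω, |Y ω| ≤ B) (hmean : ∫ ω, Y ω ∂μ = 0) (s : ℝ) :
    mgf Y μ s ≤ Real.exp (s ^ 2 * B ^ 2 / 2) := by
  have hBne : B ≠ 0 := hB.ne'
  have key : ∀ ω, Real.exp (s * Y ω) ≤
      Real.cosh (s * B) + (Real.sinh (s * B) / B) * Y ω := by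
    intro ω
    have hmem := hbd ω
    have hy1 : -B ≤ Y ω := neg_le_of_abs_le hmem
    have hy2 : Y ω ≤ B := le_of_abs_le hmem
    set y := Y ω with hy
    have h1 : 0 ≤ (B + y) / (2 * B) := by
      apply div_nonneg (by linarith) (by linarith)
    have h2 : 0 ≤ (B - y) / (2 * B) := by
      apply div_nonneg (by linarith) (by linarith)
    have h3 : (B + y) / (2 * B) + (B - y) / (2 * B) = 1 := by
      field_simp
      ring
    have hconv := convexOn_exp.2 (Set.mem_univ (s * B)) (Set.mem_univ (-(s * B))) h1 h2 h3
    have harg : ((B + y) / (2 * B)) • (s * B) + ((B - y) / (2 * B)) • (-(s * B)) = s * y := by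
      simp only [smul_eq_mul]
      rw [div_mul_eq_mul_div, div_mul_eq_mul_div, ← add_div,
        div_eq_iff (by positivity : (2 : ℝ) * B ≠ 0)]
      ring
    rw [harg] at hconv
    refine hconv.trans_eq ?_
    simp only [smul_eq_mul, Real.cosh_eq, Real.sinh_eq, Real.exp_neg]
    have he : Real.exp (s * B) ≠ 0 := (Real.exp_pos _).ne'
    field_simp
    ring
  have hYint : Integrable Y μ :=
    Integrable.mono' (integrable_const B) hY.aestronglyMeasurable
      (ae_of_all _ fun ω => hbd ω)
  have hint2 : Integrable (fun ω => Real.cosh (s * B) + (Real.sinh (s * B) / B) * Y ω) μ :=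
    (integrable_const _).add (hYint.const_mul _)
  have : mgf Y μ s ≤ ∫ ω, (Real.cosh (s * B) + (Real.sinh (s * B) / B) * Y ω) ∂μ := by
    refine integral_mono (ustat_integrable_exp_mul hY hbd s) hint2 key
  calc mgf Y μ s ≤ ∫ ω, (Real.cosh (s * B) + (Real.sinh (s * B) / B) * Y ω) ∂μ := this
    _ = Real.cosh (s * B) + (Real.sinh (s * B) / B) * ∫ ω, Y ω ∂μ := by
        rw [integral_add (integrable_const _) (hYint.const_mul _), integral_const,
          integral_const_mul]
        simp
    _ = Real.cosh (s * B) := by rw [hmean]; ring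
    _ ≤ Real.exp ((s * B) ^ 2 / 2) := Real.cosh_le_exp_half_sq _
    _ = Real.exp (s ^ 2 * B ^ 2 / 2) := by ring_nf

lemma ustat_mgf_const_mul (c s : ℝ) (Y : Ω → ℝ) :
    mgf (fun ω => c * Y ω) μ s = mgf Y μ (s * c) := by
  unfold mgf
  congr 1
  funext ω
  show Real.exp (s * (c * Y ω)) = Real.exp (s * c * Y ω)
  rw [mul_assoc]

lemma ustat_value_lemma {l n : ℕ} (h : (Fin l → ℝ) → ℝ)
    (hsym : ∀ (σ : Equiv.Perm (Fin l)) (x : Fin l → ℝ), h (x ∘ σ) = h x)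
    (x : Fin n → ℝ) (f : Fin l → Fin n) (hf : Function.Injective f)
    (J : Finset (Fin n)) (hJ : J.card = l) (him : Finset.image f Finset.univ = J) :
    h (fun i => x (f i)) = h (fun i => x (J.orderIsoOfFin hJ i)) := by
  have hmemf : ∀ i, f i ∈ J := fun i => him ▸ Finset.mem_image_of_mem f (Finset.mem_univ i)
  have hbij : Function.Bijective (fun i => (⟨f i, hmemf i⟩ : J)) := by
    rw [Fintype.bijective_iff_injective_and_card]
    exact ⟨fun a b hab => hf (congrArg Subtype.val hab), by simp [hJ]⟩
  let q : Fin l ≃ J := Equiv.ofBijective _ hbij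
  let τ : Equiv.Perm (Fin l) := q.trans (J.orderIsoOfFin hJ).toEquiv.symm
  have hcomp : (fun i => x ((J.orderIsoOfFin hJ) i)) ∘ τ = fun i => x (f i) := by
    funext i
    simp only [Function.comp_apply]
    congr 1
    show ((J.orderIsoOfFin hJ).toEquiv ((J.orderIsoOfFin hJ).toEquiv.symm (q i)) : Fin n) = f i
    rw [Equiv.apply_symm_apply]
    rfl
  rw [← hcomp, hsym τ]

lemma ustat_exists_perm_image {n : ℕ} (J J' : Finset (Fin n)) (hc : J.card = J'.card) :
    ∃ p : Equiv.Perm (Fin n), Finset.image (⇑p) J = J' := by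
  classical
  have e1 : {x // x ∈ J} ≃ {x // x ∈ J'} :=
    (J.equivFin).trans ((finCongr hc).trans J'.equivFin.symm)
  have hcc : {x : Fin n // x ∉ J} ≃ {x : Fin n // x ∉ J'} := by
    refine (Fintype.equivOfCardEq ?_)
    have h1 : Fintype.card {x : Fin n // x ∉ J} = n - J.card := by
      rw [Fintype.card_subtype_compl]
      simp [Fintype.card_coe]
    have h2 : Fintype.card {x : Fin n // x ∉ J'} = n - J'.card := by
      rw [Fintype.card_subtype_compl]
      simp [Fintype.card_coe]
    rw [h1, h2, hc]
  refine ⟨Equiv.subtypeCongr e1 hcc, ?_⟩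
  have hsub : Finset.image (⇑(Equiv.subtypeCongr e1 hcc)) J ⊆ J' := by
    intro a ha
    rw [Finset.mem_image] at ha
    obtain ⟨b, hb, rfl⟩ := ha
    have : Equiv.subtypeCongr e1 hcc b = (e1 ⟨b, hb⟩ : Fin n) := by
      simp [Equiv.subtypeCongr, hb]
    rw [this]
    exact (e1 ⟨b, hb⟩).2
  refine Finset.eq_of_subset_of_card_le hsub ?_
  rw [Finset.card_image_of_injective _ (Equiv.injective _), hc]

end UStatHelpers

lemma ustat_mgf_sum_blocks {Ω : Type*} [MeasurableSpace Ω] (P : Measure Ω)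
    [IsProbabilityMeasure P]
    {n l m : ℕ} (X : Fin n → Ω → ℝ) (hXmeas : ∀ i, Measurable (X i))
    (hindep : iIndepFun X P)
    (h : (Fin l → ℝ) → ℝ) (hmeas : Measurable h)
    (g : Fin m → Fin l → Fin n)
    (hginj : ∀ k k' i i', g k i = g k' i' → k = k')
    (s : ℝ) (S : Finset (Fin m)) :
    mgf (fun ω => ∑ k ∈ S, h (fun i => X (g k i) ω)) P s
      = ∏ k ∈ S, mgf (fun ω => h (fun i => X (g k i) ω)) P s := by
  classical
  induction S using Finset.induction with
  | empty => simp [mgf_const]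
  | @insert a S ha ih =>
    rw [Finset.prod_insert ha, ← ih]
    have hYmeas : ∀ k : Fin m, Measurable (fun ω => h (fun i => X (g k i) ω)) :=
      fun k => hmeas.comp (measurable_pi_lambda _ fun i => hXmeas _)
    have hSmeas : Measurable (fun ω => ∑ k ∈ S, h (fun i => X (g k i) ω)) :=
      Finset.measurable_sum _ fun k _ => hYmeas k
    -- independence
    set Ja : Finset (Fin n) := Finset.image (g a) Finset.univ with hJa
    set T : Finset (Fin n) := S.biUnion (fun k => Finset.image (g k) Finset.univ) with hT
    have hdisj : Disjoint Ja T := by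
      rw [Finset.disjoint_left]
      intro x hx hx'
      rw [hJa, Finset.mem_image] at hx
      obtain ⟨i, _, rfl⟩ := hx
      rw [hT, Finset.mem_biUnion] at hx'
      obtain ⟨k, hk, hx'⟩ := hx'
      rw [Finset.mem_image] at hx'
      obtain ⟨i', _, hgi⟩ := hx'
      exact ha ((hginj a k i i' hgi.symm) ▸ hk)
    have hbase := hindep.indepFun_finset Ja T hdisj hXmeas
    have hmemJa : ∀ i : Fin l, g a i ∈ Ja := fun i =>
      Finset.mem_image_of_mem _ (Finset.mem_univ i)
    have hmemT : ∀ k : Fin m, k ∈ S → ∀ i : Fin l, g k i ∈ T := fun k hk i =>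
      Finset.mem_biUnion.mpr ⟨k, hk, Finset.mem_image_of_mem _ (Finset.mem_univ i)⟩
    let F : (Ja → ℝ) → ℝ := fun v => h (fun i => v ⟨g a i, hmemJa i⟩)
    let G : (T → ℝ) → ℝ := fun v => ∑ k ∈ S.attach, h (fun i => v ⟨g k.1 i, hmemT k.1 k.2 i⟩)
    have hFmeas : Measurable F :=
      hmeas.comp (measurable_pi_lambda _ fun i => measurable_pi_apply _)
    have hGmeas : Measurable G :=
      Finset.measurable_sum _ fun k _ =>
        hmeas.comp (measurable_pi_lambda _ fun i => measurable_pi_apply _)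
    have hindep2 : IndepFun (fun ω => h (fun i => X (g a i) ω))
        (fun ω => ∑ k ∈ S, h (fun i => X (g k i) ω)) P := by
      have := hbase.comp hFmeas hGmeas
      have hF : (F ∘ fun ω (i : Ja) => X i ω) = fun ω => h (fun i => X (g a i) ω) := rfl
      have hG : (G ∘ fun ω (i : T) => X i ω) = fun ω => ∑ k ∈ S, h (fun i => X (g k i) ω) := by
        funext ω
        show ∑ k ∈ S.attach, h (fun i => X (g k.1 i) ω) = _
        rw [Finset.sum_attach S (fun k => h (fun i => X (g k i) ω))]
      rwa [hF, hG] at this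
    have := hindep2.mgf_add' (t := s) (hYmeas a).aestronglyMeasurable
      hSmeas.aestronglyMeasurable
    simp_rw [Finset.sum_insert ha]
    calc mgf (fun ω => h (fun i => X (g a i) ω) + ∑ k ∈ S, h (fun i => X (g k i) ω)) P s
        = mgf ((fun ω => h (fun i => X (g a i) ω)) +
            fun ω => ∑ k ∈ S, h (fun i => X (g k i) ω)) P s := rfl
      _ = _ := this

/-- Hoeffding-type deviation bound for the U-statistic with a bounded, symmetric,
centered kernel: `P(|U_{n,l}(h)| ≥ t) ≤ 2 exp(−(n/l) t² / (2‖h‖_∞²))`. -/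
theorem u_statistic_hoeffding_inequality
    {Ω : Type*} [MeasurableSpace Ω] (P : Measure Ω) [IsProbabilityMeasure P]
    (n l : ℕ) (hl : 0 < l) (hdvd : l ∣ n)
    (X : Fin n → Ω → ℝ) (hXmeas : ∀ i, Measurable (X i))
    (hindep : iIndepFun X P)
    (hident : ∀ i j : Fin n, Measure.map (X i) P = Measure.map (X j) P)
    (h : (Fin l → ℝ) → ℝ) (hmeas : Measurable h)
    (hsym : ∀ (σ : Equiv.Perm (Fin l)) (x : Fin l → ℝ), h (x ∘ σ) = h x)
    (B : ℝ) (hB : 0 < B) (hbdd : ∀ x, |h x| ≤ B)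
    (hcentered : ∀ J : Finset (Fin n), ∀ hJ : J.card = l,
      ∫ ω, h (fun i => X ((J.orderIsoOfFin hJ i : Fin n)) ω) ∂P = 0)
    (t : ℝ) (ht : 0 < t) :
    (P {ω | t ≤ |(1 / (n.choose l : ℝ)) *
        ∑ J ∈ (Finset.univ.powersetCard l : Finset (Finset (Fin n))).attach,
          h (fun i => X ((J.1.orderIsoOfFin
            ((Finset.mem_powersetCard.mp J.2).2) i : Fin n)) ω)|}).toReal
      ≤ 2 * Real.exp (-((n : ℝ) / l) * t ^ 2 / (2 * B ^ 2)) := by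
  classical
  rcases Nat.eq_zero_or_pos n with hn0 | hnpos
  · -- degenerate case n = 0
    subst hn0
    have hpc0 : (Finset.univ.powersetCard l : Finset (Finset (Fin 0))) = ∅ := by
      rw [Finset.powersetCard_eq_empty]
      simpa using hl
    have hset : {ω : Ω | t ≤ |(1 / ((0:ℕ).choose l : ℝ)) *
        ∑ J ∈ (Finset.univ.powersetCard l : Finset (Finset (Fin 0))).attach,
          h (fun i => X ((J.1.orderIsoOfFin
            ((Finset.mem_powersetCard.mp J.2).2) i : Fin 0)) ω)|} = ∅ := by
      ext ω
      simp only [Set.mem_setOf_eq, Set.mem_empty_iff_false, iff_false, not_le]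
      have hz : (∑ J ∈ (Finset.univ.powersetCard l : Finset (Finset (Fin 0))).attach,
          h (fun i => X ((J.1.orderIsoOfFin
            ((Finset.mem_powersetCard.mp J.2).2) i : Fin 0)) ω)) = 0 :=
        Finset.sum_eq_zero fun J _ =>
          absurd J.2 (Finset.eq_empty_iff_forall_notMem.mp hpc0 _)
      rw [hz, mul_zero, abs_zero]
      exact ht
    rw [hset]
    simp only [measure_empty, ENNReal.toReal_zero]
    positivity
  -- main case
  obtain ⟨m, hm⟩ := hdvd
  have hmpos : 0 < m := by
    rcases Nat.eq_zero_or_pos m with h0 | h0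
    · rw [h0, Nat.mul_zero] at hm; omega
    · exact h0
  have hln : l ≤ n := Nat.le_of_dvd hnpos ⟨m, hm⟩
  have hml : m * l = n := by rw [hm, Nat.mul_comm]
  have hmR : ((m : ℝ)) ≠ 0 := Nat.cast_ne_zero.mpr hmpos.ne'
  have hBne : B ≠ 0 := hB.ne'
  set pc : Finset (Finset (Fin n)) := Finset.univ.powersetCard l with hpc
  have hpccard : pc.card = n.choose l := by
    rw [hpc, Finset.card_powersetCard, Finset.card_univ, Fintype.card_fin]
  have hchoosepos : 0 < n.choose l := Nat.choose_pos hln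
  have hCR : ((n.choose l : ℕ) : ℝ) ≠ 0 := Nat.cast_ne_zero.mpr hchoosepos.ne'
  -- canonical kernel term for each subset
  set c : Finset (Fin n) → Ω → ℝ := fun J =>
    if hJ : J.card = l then (fun ω => h (fun i => X ((J.orderIsoOfFin hJ i : Fin n)) ω))
    else (fun _ => 0) with hc
  have hcmeas : ∀ J, Measurable (c J) := by
    intro J
    by_cases hJ : J.card = l
    · simp only [hc, dif_pos hJ]
      exact hmeas.comp (measurable_pi_lambda _ fun i => hXmeas _)
    · simp only [hc, dif_neg hJ]
      exact measurable_const
  have hcbd : ∀ J ω, |c J ω| ≤ B := by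
    intro J ω
    by_cases hJ : J.card = l
    · simp only [hc, dif_pos hJ]; exact hbdd _
    · simp only [hc, dif_neg hJ, abs_zero]; exact hB.le
  have hczero : ∀ J ∈ pc, ∫ ω, c J ω ∂P = 0 := by
    intro J hJ
    have hJc : J.card = l := (Finset.mem_powersetCard.mp hJ).2
    simp only [hc, dif_pos hJc]
    exact hcentered J hJc
  -- blocks
  set e : Fin m × Fin l ≃ Fin n := finProdFinEquiv.trans (finCongr hml) with he
  set g : Equiv.Perm (Fin n) → Fin m → Fin l → Fin n :=
    fun σ k i => σ (e (k, i)) with hg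
  have hgkinj : ∀ σ k, Function.Injective (g σ k) := by
    intro σ k i i' hii
    have := e.injective (σ.injective hii)
    exact (Prod.mk.injEq _ _ _ _).mp this |>.2
  have hgblock : ∀ (σ : Equiv.Perm (Fin n)) k k' i i', g σ k i = g σ k' i' → k = k' := by
    intro σ k k' i i' hii
    have := e.injective (σ.injective hii)
    exact (Prod.mk.injEq _ _ _ _).mp this |>.1
  set key : Equiv.Perm (Fin n) × Fin m → Finset (Fin n) :=
    fun p => Finset.image (g p.1 p.2) Finset.univ with hkey
  have hkeycard : ∀ p, (key p).card = l := by
    intro p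
    rw [hkey]
    rw [Finset.card_image_of_injective _ (hgkinj _ _), Finset.card_univ, Fintype.card_fin]
  have hkeymem : ∀ p, key p ∈ pc := fun p =>
    Finset.mem_powersetCard.mpr ⟨Finset.subset_univ _, hkeycard p⟩
  have hYc : ∀ σ k ω, h (fun i => X (g σ k i) ω) = c (key (σ, k)) ω := by
    intro σ k ω
    have hkc : (key (σ, k)).card = l := hkeycard (σ, k)
    simp only [hc, dif_pos hkc]
    exact ustat_value_lemma h hsym (fun j => X j ω) (g σ k) (hgkinj σ k) _ hkc rfl
  -- fiber counting
  have hfiber : ∀ J ∈ pc, ∀ J' ∈ pc,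
      (Finset.univ.filter (fun p : Equiv.Perm (Fin n) × Fin m => key p = J)).card =
      (Finset.univ.filter (fun p : Equiv.Perm (Fin n) × Fin m => key p = J')).card := by
    intro J hJ J' hJ'
    obtain ⟨q0, hq0⟩ := ustat_exists_perm_image J J'
      (by rw [(Finset.mem_powersetCard.mp hJ).2, (Finset.mem_powersetCard.mp hJ').2])
    have hkeymul : ∀ (ρ : Equiv.Perm (Fin n)) (σ : Equiv.Perm (Fin n)) (k : Fin m),
        key (ρ * σ, k) = Finset.image (⇑ρ) (key (σ, k)) := by
      intro ρ σ k
      rw [hkey, Finset.image_image]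
      rfl
    have hq0inv : (⇑q0⁻¹ ∘ ⇑q0) = id := by
      funext x
      simp
    refine Finset.card_bij' (fun p _ => (q0 * p.1, p.2)) (fun p _ => (q0⁻¹ * p.1, p.2)) ?_ ?_ ?_ ?_
    · intro p hp
      rw [Finset.mem_filter] at hp ⊢
      refine ⟨Finset.mem_univ _, ?_⟩
      show key (q0 * p.1, p.2) = J'
      rw [hkeymul q0 p.1 p.2, Prod.mk.eta, hp.2, hq0]
    · intro p hp
      rw [Finset.mem_filter] at hp ⊢
      refine ⟨Finset.mem_univ _, ?_⟩
      show key (q0⁻¹ * p.1, p.2) = J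
      rw [hkeymul q0⁻¹ p.1 p.2, Prod.mk.eta, hp.2, ← hq0, Finset.image_image, hq0inv,
        Finset.image_id]
    · intro p hp
      show ((q0⁻¹ * (q0 * p.1), p.2) : Equiv.Perm (Fin n) × Fin m) = p
      rw [inv_mul_cancel_left]
    · intro p hp
      show ((q0 * (q0⁻¹ * p.1), p.2) : Equiv.Perm (Fin n) × Fin m) = p
      rw [mul_inv_cancel_left]
  have hsumfib : ∑ J ∈ pc,
      (Finset.univ.filter (fun p : Equiv.Perm (Fin n) × Fin m => key p = J)).card
      = n.factorial * m := by
    rw [← Finset.card_eq_sum_card_fiberwise (fun p _ => hkeymem p)]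
    rw [Finset.card_univ, Fintype.card_prod, Fintype.card_perm, Fintype.card_fin,
      Fintype.card_fin]
  have hpcne : pc.Nonempty := Finset.card_pos.mp (by rw [hpccard]; exact hchoosepos)
  obtain ⟨J₀, hJ₀⟩ := hpcne
  set N₀ : ℕ := (Finset.univ.filter
    (fun p : Equiv.Perm (Fin n) × Fin m => key p = J₀)).card with hN₀def
  have hN0 : (n.choose l) * N₀ = n.factorial * m := by
    rw [← hsumfib, ← hpccard]
    rw [Finset.sum_congr rfl (fun J hJ => hfiber J hJ J₀ hJ₀), Finset.sum_const, smul_eq_mul]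
  -- Hoeffding representation
  have hrep : ∀ ω, ∑ p : Equiv.Perm (Fin n) × Fin m, h (fun i => X (g p.1 p.2 i) ω)
      = (N₀ : ℝ) * ∑ J ∈ pc, c J ω := by
    intro ω
    rw [← Finset.sum_fiberwise_of_maps_to (fun p _ => hkeymem p)
      (fun p => h (fun i => X (g p.1 p.2 i) ω))]
    rw [Finset.mul_sum]
    refine Finset.sum_congr rfl fun J hJ => ?_
    have hterm : ∀ p ∈ Finset.univ.filter
        (fun p : Equiv.Perm (Fin n) × Fin m => key p = J),
        h (fun i => X (g p.1 p.2 i) ω) = c J ω := by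
      intro p hp
      rw [Finset.mem_filter] at hp
      rw [hYc p.1 p.2 ω, Prod.mk.eta, hp.2]
    rw [Finset.sum_congr rfl hterm, Finset.sum_const, nsmul_eq_mul, hfiber J hJ J₀ hJ₀]
  -- the U-statistic in canonical form
  set Uc : Ω → ℝ := fun ω => (1 / (n.choose l : ℝ)) * ∑ J ∈ pc, c J ω with hUc
  have hUceq : ∀ ω, (1 / (n.choose l : ℝ)) *
      ∑ J ∈ pc.attach, h (fun i => X ((J.1.orderIsoOfFin
        ((Finset.mem_powersetCard.mp J.2).2) i : Fin n)) ω) = Uc ω := by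
    intro ω
    rw [hUc]
    congr 1
    rw [← Finset.sum_attach pc (fun J => c J ω)]
    refine Finset.sum_congr rfl fun J _ => ?_
    simp only [hc, dif_pos ((Finset.mem_powersetCard.mp J.2).2)]
  have hUcmeas : Measurable Uc :=
    measurable_const.mul (Finset.measurable_sum _ fun J _ => hcmeas J)
  have hUcbd : ∀ ω, |Uc ω| ≤ B := by
    intro ω
    rw [hUc]
    calc |1 / (n.choose l : ℝ) * ∑ J ∈ pc, c J ω|
        = (1 / (n.choose l : ℝ)) * |∑ J ∈ pc, c J ω| := by
          rw [abs_mul, abs_of_nonneg (by positivity)]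
      _ ≤ (1 / (n.choose l : ℝ)) * (pc.card * B) := by
          refine mul_le_mul_of_nonneg_left ?_ (by positivity)
          refine (Finset.abs_sum_le_sum_abs _ _).trans ?_
          calc ∑ J ∈ pc, |c J ω| ≤ ∑ _J ∈ pc, B := Finset.sum_le_sum fun J _ => hcbd J ω
            _ = pc.card * B := by rw [Finset.sum_const, nsmul_eq_mul]
      _ = B := by
          rw [hpccard]
          field_simp
  -- W functions
  set W : Equiv.Perm (Fin n) → Ω → ℝ :=
    fun σ ω => (m : ℝ)⁻¹ * ∑ k : Fin m, h (fun i => X (g σ k i) ω) with hW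
  have hYmeas : ∀ σ k, Measurable (fun ω => h (fun i => X (g σ k i) ω)) :=
    fun σ k => hmeas.comp (measurable_pi_lambda _ fun i => hXmeas _)
  have hWmeas : ∀ σ, Measurable (W σ) := fun σ =>
    measurable_const.mul (Finset.measurable_sum _ fun k _ => hYmeas σ k)
  have hWbd : ∀ σ ω, |W σ ω| ≤ B := by
    intro σ ω
    rw [hW]
    calc |(m : ℝ)⁻¹ * ∑ k : Fin m, h (fun i => X (g σ k i) ω)|
        = (m : ℝ)⁻¹ * |∑ k : Fin m, h (fun i => X (g σ k i) ω)| := by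
          rw [abs_mul, abs_of_nonneg (by positivity)]
      _ ≤ (m : ℝ)⁻¹ * (m * B) := by
          refine mul_le_mul_of_nonneg_left ?_ (by positivity)
          refine (Finset.abs_sum_le_sum_abs _ _).trans ?_
          calc ∑ k : Fin m, |h (fun i => X (g σ k i) ω)| ≤ ∑ _k : Fin m, B :=
                Finset.sum_le_sum fun k _ => hbdd _
            _ = m * B := by rw [Finset.sum_const, nsmul_eq_mul, Finset.card_univ,
                Fintype.card_fin]
      _ = B := by field_simp
  -- averaging identity
  have hUavg : ∀ ω, Uc ω = ((n.factorial : ℝ))⁻¹ * ∑ σ : Equiv.Perm (Fin n), W σ ω := by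
    intro ω
    have hsum : ∑ σ : Equiv.Perm (Fin n), W σ ω
        = (m : ℝ)⁻¹ * ((N₀ : ℝ) * ∑ J ∈ pc, c J ω) := by
      rw [← hrep ω]
      rw [Fintype.sum_prod_type]
      rw [Finset.mul_sum]
    have hNkey : ((n.choose l : ℕ) : ℝ) * (N₀ : ℝ) = (n.factorial : ℝ) * (m : ℝ) := by
      exact_mod_cast congrArg (Nat.cast (R := ℝ)) hN0
    have hfactne : ((n.factorial : ℕ) : ℝ) ≠ 0 :=
      Nat.cast_ne_zero.mpr (Nat.factorial_pos n).ne'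
    have hscal : (1 / (n.choose l : ℝ)) = ((n.factorial : ℝ))⁻¹ * ((m : ℝ)⁻¹ * (N₀ : ℝ)) := by
      field_simp
      linear_combination -hNkey
    calc Uc ω = (1 / (n.choose l : ℝ)) * ∑ J ∈ pc, c J ω := rfl
      _ = ((n.factorial : ℝ))⁻¹ * ((m : ℝ)⁻¹ * ((N₀ : ℝ) * ∑ J ∈ pc, c J ω)) := by
          rw [hscal]; ring
      _ = _ := by rw [← hsum]
    -- centering of block variables
  have hYzero : ∀ (σ : Equiv.Perm (Fin n)) (k : Fin m),
      ∫ ω, h (fun i => X (g σ k i) ω) ∂P = 0 := by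
    intro σ k
    rw [show (fun ω => h (fun i => X (g σ k i) ω)) = c (key (σ, k)) from funext (hYc σ k)]
    exact hczero _ (hkeymem (σ, k))
  -- mgf bound for each W
  have hmgfW : ∀ (σ : Equiv.Perm (Fin n)) (s : ℝ),
      mgf (W σ) P s ≤ Real.exp (s ^ 2 * B ^ 2 / (2 * m)) := by
    intro σ s
    have hb : mgf (fun ω => (m : ℝ)⁻¹ * ∑ k : Fin m, h (fun i => X (g σ k i) ω)) P s
        ≤ Real.exp (s ^ 2 * B ^ 2 / (2 * m)) := by
      rw [ustat_mgf_const_mul]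
      rw [ustat_mgf_sum_blocks P X hXmeas hindep h hmeas (g σ) (hgblock σ)
        (s * (m : ℝ)⁻¹) Finset.univ]
      calc ∏ k : Fin m, mgf (fun ω => h (fun i => X (g σ k i) ω)) P (s * (m : ℝ)⁻¹)
          ≤ ∏ _k : Fin m, Real.exp ((s * (m : ℝ)⁻¹) ^ 2 * B ^ 2 / 2) :=
            Finset.prod_le_prod (fun k _ => mgf_nonneg)
              (fun k _ => ustat_hoeffding_mgf (hYmeas σ k) hB (fun ω => hbdd _)
                (hYzero σ k) _)
        _ = Real.exp (∑ _k : Fin m, (s * (m : ℝ)⁻¹) ^ 2 * B ^ 2 / 2) := by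
            rw [Real.exp_sum]
        _ = Real.exp ((m : ℝ) * ((s * (m : ℝ)⁻¹) ^ 2 * B ^ 2 / 2)) := by
            rw [Finset.sum_const, Finset.card_univ, Fintype.card_fin, nsmul_eq_mul]
        _ ≤ Real.exp (s ^ 2 * B ^ 2 / (2 * m)) := by
            apply le_of_eq
            congr 1
            field_simp
    exact hb
  -- mgf bound for U via Jensen
  have hweight : ∑ _σ : Equiv.Perm (Fin n), ((n.factorial : ℝ))⁻¹ = 1 := by
    rw [Finset.sum_const, Finset.card_univ, Fintype.card_perm, Fintype.card_fin,
      nsmul_eq_mul]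
    field_simp
  have hmgfU : ∀ s : ℝ, mgf Uc P s ≤ Real.exp (s ^ 2 * B ^ 2 / (2 * m)) := by
    intro s
    have hptwise : ∀ ω, Real.exp (s * Uc ω) ≤
        ∑ σ : Equiv.Perm (Fin n), ((n.factorial : ℝ))⁻¹ * Real.exp (s * W σ ω) := by
      intro ω
      have harg : s * Uc ω
          = ∑ σ : Equiv.Perm (Fin n), ((n.factorial : ℝ))⁻¹ • (s * W σ ω) := by
        rw [hUavg ω, Finset.mul_sum, Finset.mul_sum]
        refine Finset.sum_congr rfl fun σ _ => ?_
        simp only [smul_eq_mul]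
        ring
      have hjensen := convexOn_exp.map_sum_le
        (fun (σ : Equiv.Perm (Fin n)) (_ : σ ∈ Finset.univ) =>
          inv_nonneg.mpr (Nat.cast_nonneg n.factorial))
        hweight (fun σ _ => Set.mem_univ (s * W σ ω))
      rw [← harg] at hjensen
      simpa only [smul_eq_mul] using hjensen
    have hintW : ∀ σ : Equiv.Perm (Fin n),
        Integrable (fun ω => Real.exp (s * W σ ω)) P :=
      fun σ => ustat_integrable_exp_mul (hWmeas σ) (hWbd σ) s
    have hintU : Integrable (fun ω => Real.exp (s * Uc ω)) P :=
      ustat_integrable_exp_mul hUcmeas hUcbd s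
    calc mgf Uc P s = ∫ ω, Real.exp (s * Uc ω) ∂P := rfl
      _ ≤ ∫ ω, (∑ σ : Equiv.Perm (Fin n),
            ((n.factorial : ℝ))⁻¹ * Real.exp (s * W σ ω)) ∂P :=
          integral_mono hintU
            (integrable_finset_sum _ (fun σ _ => (hintW σ).const_mul _)) hptwise
      _ = ∑ σ : Equiv.Perm (Fin n), ((n.factorial : ℝ))⁻¹ * mgf (W σ) P s := by
          rw [integral_finset_sum _ (fun σ _ => (hintW σ).const_mul _)]
          refine Finset.sum_congr rfl fun σ _ => ?_
          rw [integral_const_mul]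
          rfl
      _ ≤ ∑ _σ : Equiv.Perm (Fin n),
            ((n.factorial : ℝ))⁻¹ * Real.exp (s ^ 2 * B ^ 2 / (2 * m)) :=
          Finset.sum_le_sum (fun σ _ =>
            mul_le_mul_of_nonneg_left (hmgfW σ s) (by positivity))
      _ = Real.exp (s ^ 2 * B ^ 2 / (2 * m)) := by
          rw [Finset.sum_const, Finset.card_univ, Fintype.card_perm, Fintype.card_fin,
            nsmul_eq_mul, ← mul_assoc]
          rw [show ((n.factorial : ℕ) : ℝ) * ((n.factorial : ℝ))⁻¹ = 1 from by field_simp]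
          rw [one_mul]
  -- Chernoff bounds
  have hlR : ((l : ℕ) : ℝ) ≠ 0 := Nat.cast_ne_zero.mpr hl.ne'
  have hmeq : ((n : ℝ) / l) = (m : ℝ) := by
    have hcast : (n : ℝ) = (l : ℝ) * m := by exact_mod_cast congrArg (Nat.cast (R := ℝ)) hm
    rw [hcast]
    field_simp
  set lam : ℝ := (m : ℝ) * t / B ^ 2 with hlam
  have hlamnn : 0 ≤ lam := by positivity
  have hexp_eq : Real.exp (-lam * t) * Real.exp (lam ^ 2 * B ^ 2 / (2 * m))
      = Real.exp (-(m : ℝ) * t ^ 2 / (2 * B ^ 2)) := by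
    rw [← Real.exp_add]
    congr 1
    rw [hlam]
    field_simp
    ring
  have h1 : (P {ω | t ≤ Uc ω}).toReal ≤ Real.exp (-(m : ℝ) * t ^ 2 / (2 * B ^ 2)) := by
    calc (P {ω | t ≤ Uc ω}).toReal ≤ Real.exp (-lam * t) * mgf Uc P lam :=
        measure_ge_le_exp_mul_mgf t hlamnn (ustat_integrable_exp_mul hUcmeas hUcbd lam)
      _ ≤ Real.exp (-lam * t) * Real.exp (lam ^ 2 * B ^ 2 / (2 * m)) :=
        mul_le_mul_of_nonneg_left (hmgfU lam) (Real.exp_nonneg _)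
      _ = _ := hexp_eq
  have h2 : (P {ω | Uc ω ≤ -t}).toReal ≤ Real.exp (-(m : ℝ) * t ^ 2 / (2 * B ^ 2)) := by
    calc (P {ω | Uc ω ≤ -t}).toReal ≤ Real.exp (-(-lam) * (-t)) * mgf Uc P (-lam) :=
        measure_le_le_exp_mul_mgf (-t) (neg_nonpos.mpr hlamnn)
          (ustat_integrable_exp_mul hUcmeas hUcbd (-lam))
      _ = Real.exp (-lam * t) * mgf Uc P (-lam) := by
          rw [show -(-lam) * (-t) = -lam * t from by ring]
      _ ≤ Real.exp (-lam * t) * Real.exp ((-lam) ^ 2 * B ^ 2 / (2 * m)) :=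
        mul_le_mul_of_nonneg_left (hmgfU (-lam)) (Real.exp_nonneg _)
      _ = _ := by
          rw [show ((-lam) ^ 2 : ℝ) = lam ^ 2 from by ring]
          exact hexp_eq
  -- put everything together
  have hseteq : {ω : Ω | t ≤ |(1 / (n.choose l : ℝ)) *
      ∑ J ∈ pc.attach, h (fun i => X ((J.1.orderIsoOfFin
        ((Finset.mem_powersetCard.mp J.2).2) i : Fin n)) ω)|} = {ω : Ω | t ≤ |Uc ω|} :=
    Set.ext fun ω => by rw [Set.mem_setOf_eq, Set.mem_setOf_eq, hUceq ω]
  rw [hseteq, hmeq]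
  have hsub : {ω : Ω | t ≤ |Uc ω|} ⊆ {ω | t ≤ Uc ω} ∪ {ω | Uc ω ≤ -t} := by
    intro ω hω
    rw [Set.mem_setOf_eq] at hω
    rcases le_abs.mp hω with h' | h'
    · exact Or.inl h'
    · exact Or.inr (le_neg.mp h')
  calc (P {ω | t ≤ |Uc ω|}).toReal
      ≤ (P ({ω | t ≤ Uc ω} ∪ {ω | Uc ω ≤ -t})).toReal :=
        ENNReal.toReal_mono (measure_ne_top _ _) (measure_mono hsub)
    _ ≤ ((P {ω | t ≤ Uc ω} + P {ω | Uc ω ≤ -t}).toReal) :=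
        ENNReal.toReal_mono
          (ENNReal.add_ne_top.mpr ⟨measure_ne_top _ _, measure_ne_top _ _⟩)
          (measure_union_le _ _)
    _ = (P {ω | t ≤ Uc ω}).toReal + (P {ω | Uc ω ≤ -t}).toReal :=
        ENNReal.toReal_add (measure_ne_top _ _) (measure_ne_top _ _)
    _ ≤ Real.exp (-(m : ℝ) * t ^ 2 / (2 * B ^ 2))
          + Real.exp (-(m : ℝ) * t ^ 2 / (2 * B ^ 2)) := add_le_add h1 h2
    _ = 2 * Real.exp (-(m : ℝ) * t ^ 2 / (2 * B ^ 2)) := by ring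
end

section
/- Let h: ℝ^l → ℝ be symmetric and integrable with respect to P^l, and define the Hoeffding projections h^{(j)}(y_1,…,y_j) = (δ_{y_1} − P)×…×(δ_{y_j} − P)×P^{l−j} h for 1 ≤ j ≤ l. Then E[h^{(j)}(Y_1,…,Y_j) | Y_1,…,Y_{j−1}] = 0 almost surely for j ≥ 1, where Y_1, Y_2, … are i.i.d. with law P; i.e., the kernels h^{(j)} are degenerate. -/
open MeasureTheory

/-- Pushforward of a finite product of copies of a probability measure under
precomposition with an injective map is again the product measure. -/
lemma measurePreserving_comp_injective {ι κ : Type*} [Fintype ι] [Fintype κ]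
    {f : ι → κ} (hf : Function.Injective f) (P : Measure ℝ) [IsProbabilityMeasure P] :
    MeasurePreserving (fun x : κ → ℝ => x ∘ f)
      (Measure.pi fun _ : κ => P) (Measure.pi fun _ : ι => P) := by
  classical
  haveI : Fintype ((Set.range f)ᶜ : Set κ) := Fintype.ofFinite _
  let e : ι ⊕ ((Set.range f)ᶜ : Set κ) ≃ κ :=
    (Equiv.sumCongr (Equiv.ofInjective f hf) (Equiv.refl _)).trans
      (Equiv.Set.sumCompl (Set.range f))
  have h1 : MeasurePreserving (MeasurableEquiv.piCongrLeft (fun _ : κ => ℝ) e)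
      (Measure.pi fun _ : ι ⊕ ((Set.range f)ᶜ : Set κ) => P) (Measure.pi fun _ : κ => P) :=
    measurePreserving_piCongrLeft (fun _ => P) e
  have h2 := h1.symm
  have h3 := measurePreserving_sumPiEquivProdPi
    (fun _ : ι ⊕ ((Set.range f)ᶜ : Set κ) => (P : Measure ℝ))
  have h4 : MeasurePreserving (Prod.fst : ((ι → ℝ) × (((Set.range f)ᶜ : Set κ) → ℝ)) → (ι → ℝ))
      ((Measure.pi fun _ : ι => P).prod (Measure.pi fun _ => P)) (Measure.pi fun _ : ι => P) := by
    constructor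
    · exact measurable_fst
    · rw [Measure.map_fst_prod]
      simp
  have hcomp := (h4.comp h3).comp h2
  convert hcomp using 1
  funext x
  rfl

/-- `Sum.elim` as a measure preserving map from the product of two pi-measures. -/
lemma measurePreserving_sumElim {ι κ : Type*} [Fintype ι] [Fintype κ]
    (P : Measure ℝ) [IsProbabilityMeasure P] :
    MeasurePreserving (fun p : (ι → ℝ) × (κ → ℝ) => Sum.elim p.1 p.2)
      ((Measure.pi fun _ : ι => P).prod (Measure.pi fun _ : κ => P))
      (Measure.pi fun _ : ι ⊕ κ => P) := by
  have h := measurePreserving_sumPiEquivProdPi_symm (fun _ : ι ⊕ κ => (P : Measure ℝ))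
  convert h using 1
  funext p
  rfl

/-- Appending an independent coordinate: `snoc` is measure preserving. -/
lemma measurePreserving_snoc (P : Measure ℝ) [IsProbabilityMeasure P] (j : ℕ) :
    MeasurePreserving (fun p : (Fin j → ℝ) × ℝ => (Fin.snoc p.1 p.2 : Fin (j+1) → ℝ))
      ((Measure.pi fun _ : Fin j => P).prod P) (Measure.pi fun _ : Fin (j+1) => P) := by
  have h1 := (measurePreserving_piFinSuccAbove (fun _ : Fin (j+1) => (P : Measure ℝ))
    (Fin.last j)).symm
  have h2 : MeasurePreserving (Prod.swap : (Fin j → ℝ) × ℝ → ℝ × (Fin j → ℝ))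
      ((Measure.pi fun _ : Fin j => P).prod P) (P.prod (Measure.pi fun _ : Fin j => P)) :=
    Measure.measurePreserving_swap
  have h := h1.comp h2
  convert h using 1
  funext p
  show (Fin.snoc p.1 p.2 : Fin (j+1) → ℝ)
      = (MeasurableEquiv.piFinSuccAbove (fun _ => ℝ) (Fin.last j)).symm (p.2, p.1)
  simp [MeasurableEquiv.piFinSuccAbove, Fin.insertNthEquiv, Fin.insertNth_last]

/-- Updating one coordinate with an independent variable is measure preserving. -/
lemma measurePreserving_update (P : Measure ℝ) [IsProbabilityMeasure P] {l : ℕ} (i₀ : Fin l) :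
    MeasurePreserving (fun p : ℝ × (Fin l → ℝ) => Function.update p.2 i₀ p.1)
      (P.prod (Measure.pi fun _ : Fin l => P)) (Measure.pi fun _ : Fin l => P) := by
  classical
  let g : Fin l → Unit ⊕ Fin l := fun i => if i = i₀ then Sum.inl () else Sum.inr i
  have hg : Function.Injective g := by
    intro a b hab
    by_cases ha : a = i₀ <;> by_cases hb : b = i₀ <;>
      simp [g, ha, hb] at hab ⊢ <;> simp_all
  have h1 : MeasurePreserving (fun p : ℝ × (Fin l → ℝ) => ((fun _ : Unit => p.1), p.2))
      (P.prod (Measure.pi fun _ : Fin l => P))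
      ((Measure.pi fun _ : Unit => P).prod (Measure.pi fun _ : Fin l => P)) := by
    have hu := (measurePreserving_funUnique (P : Measure ℝ) Unit).symm
    exact hu.prod (MeasurePreserving.id _)
  have h2 := measurePreserving_sumElim (ι := Unit) (κ := Fin l) P
  have h3 := measurePreserving_comp_injective hg P
  have h := (h3.comp h2).comp h1
  convert h using 1
  funext p
  show Function.update p.2 i₀ p.1 = (Sum.elim (fun _ : Unit => p.1) p.2) ∘ g
  funext i
  by_cases hi : i = i₀ <;> simp [g, hi, Function.update_apply]

/-- The selection map for the subset `S`: coordinates in `S` come from the first block. -/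
def hpSel (j l : ℕ) (S : Finset (Fin (j+1))) : Fin l → (Fin (j+1)) ⊕ (Fin l) := fun i =>
  if h' : (i : ℕ) < j + 1 then
    (if (⟨i, h'⟩ : Fin (j+1)) ∈ S then Sum.inl ⟨i, h'⟩ else Sum.inr i) else Sum.inr i

lemma hpSel_injective (j l : ℕ) (S : Finset (Fin (j+1))) :
    Function.Injective (hpSel j l S) := by
  intro a b hab
  unfold hpSel at hab
  split at hab <;> split at hab <;>
    first
      | (split at hab <;> try split at hab) <;> simp_all <;> exact Fin.ext hab
      | (try split at hab) <;> simp_all <;> exact Fin.ext hab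

lemma comp_hpSel (j l : ℕ) (S : Finset (Fin (j+1))) (v : Fin (j+1) → ℝ) (w : Fin l → ℝ) :
    (Sum.elim v w) ∘ hpSel j l S = fun i : Fin l => if h' : (i : ℕ) < j + 1 then
      (if (⟨i, h'⟩ : Fin (j+1)) ∈ S then v ⟨i, h'⟩ else w i) else w i := by
  funext i
  unfold hpSel
  rcases Nat.lt_or_ge (i : ℕ) (j+1) with h' | h'
  · by_cases hS : (⟨i, h'⟩ : Fin (j+1)) ∈ S <;> simp [h', hS, Nat.lt_succ_iff.mp h']
  · simp [Nat.not_lt.mpr h', Nat.not_le.mpr h']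

lemma elim_snoc_hpSel_not_last {j l : ℕ} (S : Finset (Fin (j+1))) (hS : Fin.last j ∉ S)
    (y : Fin j → ℝ) (z z' : ℝ) (w : Fin l → ℝ) :
    Sum.elim (Fin.snoc y z : Fin (j+1) → ℝ) w ∘ hpSel j l S
      = Sum.elim (Fin.snoc y z' : Fin (j+1) → ℝ) w ∘ hpSel j l S := by
  funext i
  simp only [Function.comp_apply]
  unfold hpSel
  by_cases h' : (i : ℕ) < j + 1
  · by_cases hmem : (⟨i, h'⟩ : Fin (j+1)) ∈ S
    · have hne : ((i : ℕ)) ≠ j := by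
        intro hji
        exact hS (by rwa [show (⟨(i : ℕ), h'⟩ : Fin (j+1)) = Fin.last j from Fin.ext hji] at hmem)
      have hlt : (i : ℕ) < j := lt_of_le_of_ne (Nat.lt_succ_iff.mp h') hne
      have e1 : (⟨(i : ℕ), h'⟩ : Fin (j+1)) = Fin.castSucc ⟨i, hlt⟩ := rfl
      rw [e1] at hmem
      simp only [dif_pos h', e1, if_pos hmem, Sum.elim_inl, Fin.snoc_castSucc]
    · simp only [dif_pos h', if_neg hmem, Sum.elim_inr]
  · simp only [dif_neg h', Sum.elim_inr]

lemma elim_snoc_hpSel_last {j l : ℕ} (hjl : j < l) (S : Finset (Fin (j+1)))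
    (hS : Fin.last j ∈ S) (y : Fin j → ℝ) (z z' : ℝ) (w : Fin l → ℝ) :
    Sum.elim (Fin.snoc y z : Fin (j+1) → ℝ) w ∘ hpSel j l S
      = Sum.elim (Fin.snoc y z' : Fin (j+1) → ℝ) (Function.update w ⟨j, hjl⟩ z)
          ∘ hpSel j l (S.erase (Fin.last j)) := by
  classical
  funext i
  simp only [Function.comp_apply]
  unfold hpSel
  by_cases h' : (i : ℕ) < j + 1
  · by_cases hij : (i : ℕ) = j
    · have hlast : (⟨(i : ℕ), h'⟩ : Fin (j+1)) = Fin.last j := Fin.ext hij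
      have hii : i = (⟨j, hjl⟩ : Fin l) := Fin.ext hij
      simp only [dif_pos h', hlast, if_pos hS, if_neg (Finset.notMem_erase (Fin.last j) S),
        Sum.elim_inl, Sum.elim_inr, Fin.snoc_last]
      rw [hii, Function.update_self]
    · have hlt : (i : ℕ) < j := lt_of_le_of_ne (Nat.lt_succ_iff.mp h') hij
      have hne_last : (⟨(i : ℕ), h'⟩ : Fin (j+1)) ≠ Fin.last j := by
        intro hc
        exact hij (by simpa using congrArg Fin.val hc)
      have hne_i₀ : i ≠ (⟨j, hjl⟩ : Fin l) := fun hc => hij (congrArg Fin.val hc)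
      by_cases hmem : (⟨i, h'⟩ : Fin (j+1)) ∈ S
      · have hmem' : (⟨i, h'⟩ : Fin (j+1)) ∈ S.erase (Fin.last j) :=
          Finset.mem_erase.mpr ⟨hne_last, hmem⟩
        have e1 : (⟨(i : ℕ), h'⟩ : Fin (j+1)) = Fin.castSucc ⟨i, hlt⟩ := rfl
        rw [e1] at hmem hmem'
        simp only [dif_pos h', e1, if_pos hmem, if_pos hmem', Sum.elim_inl, Fin.snoc_castSucc]
      · have hmem' : (⟨i, h'⟩ : Fin (j+1)) ∉ S.erase (Fin.last j) := fun hc =>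
          hmem (Finset.mem_of_mem_erase hc)
        simp only [dif_pos h', if_neg hmem, if_neg hmem', Sum.elim_inr]
        rw [Function.update_of_ne hne_i₀]
  · have hne_i₀ : i ≠ (⟨j, hjl⟩ : Fin l) := by
      intro hc
      exact h' (by rw [hc]; exact Nat.lt_succ_self j)
    simp only [dif_neg h', Sum.elim_inr]
    rw [Function.update_of_ne hne_i₀]

lemma measurable_snocElim {j l : ℕ} (S : Finset (Fin (j+1))) :
    Measurable (fun q : (Fin j → ℝ) × ℝ × (Fin l → ℝ) =>
      (Sum.elim (Fin.snoc q.1 q.2.1 : Fin (j+1) → ℝ) q.2.2) ∘ hpSel j l S) := by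
  apply measurable_pi_lambda
  intro i
  show Measurable fun q : (Fin j → ℝ) × ℝ × (Fin l → ℝ) =>
    Sum.elim (Fin.snoc q.1 q.2.1 : Fin (j+1) → ℝ) q.2.2 (hpSel j l S i)
  rcases hpSel j l S i with k | k
  · simp only [Sum.elim_inl]
    induction k using Fin.lastCases with
    | last =>
      simp only [Fin.snoc_last]
      exact measurable_fst.comp measurable_snd
    | cast k =>
      simp only [Fin.snoc_castSucc]
      exact (measurable_pi_apply k).comp measurable_fst
  · simp only [Sum.elim_inr]
    exact (measurable_pi_apply k).comp (measurable_snd.comp measurable_snd)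

/-- The `j`-th Hoeffding projection kernel
`h^{(j)}(y_1,…,y_j) = (δ_{y_1} − P) × … × (δ_{y_j} − P) × P^{l−j} h`,
written via inclusion–exclusion over the subsets `S` of coordinates where the Dirac
component is chosen. -/
noncomputable def hoeffdingProj {l : ℕ} (P : Measure ℝ) (h : (Fin l → ℝ) → ℝ) (j : ℕ) :
    (Fin j → ℝ) → ℝ :=
  fun y => ∑ S ∈ (Finset.univ : Finset (Fin j)).powerset,
    (-1 : ℝ) ^ (j - S.card) *
      ∫ z : Fin l → ℝ,
        h (fun i => if h' : (i : ℕ) < j then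
            (if (⟨i, h'⟩ : Fin j) ∈ S then y ⟨i, h'⟩ else z i) else z i)
        ∂(Measure.pi fun _ => P)

/-- Degeneracy of the Hoeffding projection kernels: for `1 ≤ j ≤ l`, the conditional
expectation of `h^{(j)}(Y_1,…,Y_j)` given `Y_1,…,Y_{j−1}` vanishes almost surely, i.e.,
for `P^{j-1}`-a.e. `(y_1,…,y_{j−1})`, integrating out the last argument gives `0`. -/
theorem hoeffdingProj_degenerate
    (P : Measure ℝ) [IsProbabilityMeasure P]
    (l : ℕ) (h : (Fin l → ℝ) → ℝ) (hmeas : Measurable h)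
    (hint : Integrable h (Measure.pi fun _ : Fin l => P))
    (hsym : ∀ (σ : Equiv.Perm (Fin l)) (x : Fin l → ℝ), h (x ∘ σ) = h x)
    (j : ℕ) (hj : j + 1 ≤ l) :
    ∀ᵐ y ∂(Measure.pi fun _ : Fin j => P),
      ∫ z, hoeffdingProj P h (j + 1) (Fin.snoc y z) ∂P = 0 := by
  classical
  set Pj := (Measure.pi fun _ : Fin j => P) with hPjdef
  set Pl := (Measure.pi fun _ : Fin l => P) with hPldef
  have hjl : j < l := hj
  set A : Finset (Fin (j+1)) → ((Fin j → ℝ) × ℝ × (Fin l → ℝ)) → ℝ :=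
    fun S q => h ((Sum.elim (Fin.snoc q.1 q.2.1 : Fin (j+1) → ℝ) q.2.2) ∘ hpSel j l S)
    with hAdef
  have hAint : ∀ S, Integrable (A S) (Pj.prod (P.prod Pl)) := by
    intro S
    have m1 := (measurePreserving_prodAssoc Pj P Pl).symm
    have m2 := (measurePreserving_snoc P j).prod (MeasurePreserving.id Pl)
    have m3 := measurePreserving_sumElim (ι := Fin (j+1)) (κ := Fin l) P
    have m4 := measurePreserving_comp_injective (hpSel_injective j l S) P
    have hΨ : MeasurePreserving
        (fun q : (Fin j → ℝ) × ℝ × (Fin l → ℝ) =>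
          (Sum.elim (Fin.snoc q.1 q.2.1 : Fin (j+1) → ℝ) q.2.2) ∘ hpSel j l S)
        (Pj.prod (P.prod Pl)) Pl := by
      have hc := ((m4.comp m3).comp m2).comp m1
      convert hc using 1
      funext q
      rfl
    exact (hΨ.integrable_comp hmeas.aestronglyMeasurable).mpr hint
  have hsec : ∀ᵐ y ∂Pj, ∀ S : Finset (Fin (j+1)),
      Integrable (fun r => A S (y, r)) (P.prod Pl) :=
    ae_all_iff.mpr fun S => (hAint S).prod_right_ae
  filter_upwards [hsec] with y hy
  have hrepr : ∀ z : ℝ, hoeffdingProj P h (j + 1) (Fin.snoc y z)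
      = ∑ S ∈ (Finset.univ : Finset (Fin (j+1))).powerset,
          (-1 : ℝ) ^ (j + 1 - S.card) * ∫ w, A S (y, (z, w)) ∂Pl := by
    intro z
    unfold hoeffdingProj
    refine Finset.sum_congr rfl fun S _ => ?_
    congr 1
    refine integral_congr_ae (Filter.Eventually.of_forall fun w => ?_)
    simp only [hAdef]
    rw [comp_hpSel j l S (Fin.snoc y z) w]
  have hGint : ∀ S : Finset (Fin (j+1)),
      Integrable (fun z => ∫ w, A S (y, (z, w)) ∂Pl) P := fun S =>
    (hy S).integral_prod_left
  have step1 : ∫ z, hoeffdingProj P h (j + 1) (Fin.snoc y z) ∂P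
      = ∑ S ∈ (Finset.univ : Finset (Fin (j+1))).powerset,
          (-1 : ℝ) ^ (j + 1 - S.card) * ∫ z, (∫ w, A S (y, (z, w)) ∂Pl) ∂P := by
    have e1 : ∫ z, hoeffdingProj P h (j + 1) (Fin.snoc y z) ∂P
        = ∫ z, (∑ S ∈ (Finset.univ : Finset (Fin (j+1))).powerset,
            (-1 : ℝ) ^ (j + 1 - S.card) * ∫ w, A S (y, (z, w)) ∂Pl) ∂P :=
      integral_congr_ae (Filter.Eventually.of_forall hrepr)
    rw [e1, integral_finset_sum _ fun S _ => ((hGint S).const_mul _)]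
    exact Finset.sum_congr rfl fun S _ => by rw [integral_const_mul]
  have hnolast : ∀ S : Finset (Fin (j+1)), Fin.last j ∉ S →
      ∫ z, (∫ w, A S (y, (z, w)) ∂Pl) ∂P = ∫ w, A S (y, (0, w)) ∂Pl := by
    intro S hS
    have hcz : ∀ z : ℝ, (∫ w, A S (y, (z, w)) ∂Pl) = ∫ w, A S (y, (0, w)) ∂Pl := by
      intro z
      refine integral_congr_ae (Filter.Eventually.of_forall fun w => ?_)
      simp only [hAdef]
      rw [elim_snoc_hpSel_not_last S hS y z 0 w]
    rw [integral_congr_ae (Filter.Eventually.of_forall hcz), integral_const]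
    simp
  have hlastEval : ∀ S : Finset (Fin (j+1)), Fin.last j ∈ S →
      ∫ z, (∫ w, A S (y, (z, w)) ∂Pl) ∂P
        = ∫ w, A (S.erase (Fin.last j)) (y, (0, w)) ∂Pl := by
    intro S hS
    have hint2 : Integrable (Function.uncurry fun z w => A S (y, (z, w))) (P.prod Pl) := hy S
    have hfub := integral_integral hint2
    rw [hfub]
    have hpt : ∀ r : ℝ × (Fin l → ℝ), A S (y, (r.1, r.2))
        = A (S.erase (Fin.last j)) (y, (0, Function.update r.2 ⟨j, hjl⟩ r.1)) := by
      intro r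
      simp only [hAdef]
      rw [elim_snoc_hpSel_last hjl S hS y r.1 0 r.2]
    rw [integral_congr_ae (Filter.Eventually.of_forall hpt)]
    have hu := measurePreserving_update P (⟨j, hjl⟩ : Fin l)
    rw [← hPldef] at hu
    have hBmeas : Measurable (fun w : Fin l → ℝ => A (S.erase (Fin.last j)) (y, (0, w))) := by
      exact hmeas.comp ((measurable_snocElim (S.erase (Fin.last j))).comp
        (measurable_const.prodMk (measurable_const.prodMk measurable_id)))
    conv_rhs => rw [← hu.map_eq]
    rw [integral_map hu.measurable.aemeasurable hBmeas.aestronglyMeasurable]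
  rw [step1]
  have huniv : (Finset.univ : Finset (Fin (j+1)))
      = insert (Fin.last j) ((Finset.univ : Finset (Fin (j+1))).erase (Fin.last j)) :=
    (Finset.insert_erase (Finset.mem_univ _)).symm
  rw [huniv, Finset.sum_powerset_insert (Finset.notMem_erase _ _), ← Finset.sum_add_distrib]
  refine Finset.sum_eq_zero fun T hT => ?_
  have hTsub := Finset.mem_powerset.mp hT
  have hTl : Fin.last j ∉ T := fun hm => Finset.notMem_erase _ _ (hTsub hm)
  have hTcard : T.card ≤ j := by
    have h1 := Finset.card_le_card hTsub
    have h2 : ((Finset.univ : Finset (Fin (j+1))).erase (Fin.last j)).card = j := by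
      rw [Finset.card_erase_of_mem (Finset.mem_univ _)]
      simp
    omega
  rw [hnolast T hTl, hlastEval (insert (Fin.last j) T) (Finset.mem_insert_self _ _),
    Finset.erase_insert hTl, Finset.card_insert_of_notMem hTl]
  have hexp1 : j + 1 - T.card = (j - T.card) + 1 := by omega
  have hexp2 : j + 1 - (T.card + 1) = j - T.card := by omega
  rw [hexp1, hexp2, pow_succ]
  ring
end

section
/- Hoeffding decomposition: for a symmetric kernel h ∈ L¹(P^l) and i.i.d. Y_1,…,Y_n with law P (n ≥ l), the centered U-statistic satisfies U_{n,l}(h) − E h = Σ_{j=1}^{l} [C(l,j)/C(n,j)] Σ_{J ⊆ [n], |J|=j} h^{(j)}(Y_i, i ∈ J), where h^{(j)} are the degenerate Hoeffding projection kernels. -/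
open MeasureTheory Finset

lemma orderEmbOfFin_congr' {α : Type*} [LinearOrder α] (s : Finset α) {k k' : ℕ}
    (h : s.card = k) (h' : s.card = k') {i : Fin k} {i' : Fin k'} (hi : (i : ℕ) = (i' : ℕ)) :
    s.orderEmbOfFin h i = s.orderEmbOfFin h' i' := by
  subst h; subst h'
  obtain rfl : i = i' := Fin.ext hi
  rfl

noncomputable def Fk {l : ℕ} (P : Measure ℝ) (h : (Fin l → ℝ) → ℝ)
    (c : Fin l → ℝ) (A : Finset (Fin l)) : ℝ :=
  ∫ z : Fin l → ℝ, h (fun i => if i ∈ A then c i else z i) ∂(Measure.pi fun _ => P)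

lemma Fk_congr {l : ℕ} (P : Measure ℝ) [IsProbabilityMeasure P] (h : (Fin l → ℝ) → ℝ)
    (hsym : ∀ (σ : Equiv.Perm (Fin l)) (x : Fin l → ℝ), h (x ∘ σ) = h x)
    {A A' : Finset (Fin l)} {c c' : Fin l → ℝ} {m : ℕ}
    (hA : A.card = m) (hA' : A'.card = m)
    (hval : ∀ k : Fin m, c (A.orderEmbOfFin hA k) = c' (A'.orderEmbOfFin hA' k)) :
    Fk P h c A = Fk P h c' A' := by
  classical
  have hcc : (Aᶜ).card = (A'ᶜ).card := by
    simp [card_compl, hA, hA']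
  let eA : Fin m ≃ {x // x ∈ A} := (A.orderIsoOfFin hA).toEquiv
  let eA' : Fin m ≃ {x // x ∈ A'} := (A'.orderIsoOfFin hA').toEquiv
  let eC : {x // x ∈ Aᶜ} ≃ {x // x ∈ A'ᶜ} :=
    ((Aᶜ).orderIsoOfFin rfl).toEquiv.symm.trans (((A'ᶜ).orderIsoOfFin hcc.symm).toEquiv)
  let eC' : {x : Fin l // ¬ x ∈ A} ≃ {x : Fin l // ¬ x ∈ A'} :=
    ((Equiv.subtypeEquivRight (fun x => (Finset.mem_compl (s := A)).symm)).trans eC).trans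
      (Equiv.subtypeEquivRight (fun x => Finset.mem_compl))
  let σ : Equiv.Perm (Fin l) :=
    ((Equiv.sumCompl (· ∈ A)).symm.trans
      (Equiv.sumCongr (eA.symm.trans eA') eC')).trans (Equiv.sumCompl (· ∈ A'))
  have fact1 : ∀ k : Fin m, σ (A.orderEmbOfFin hA k) = A'.orderEmbOfFin hA' k := by
    intro k
    have hmem : (A.orderEmbOfFin hA k) ∈ A := Finset.orderEmbOfFin_mem A hA k
    have h1 : (Equiv.sumCompl (· ∈ A)).symm (A.orderEmbOfFin hA k)
        = Sum.inl ⟨A.orderEmbOfFin hA k, hmem⟩ :=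
      Equiv.sumCompl_symm_apply_of_pos hmem
    have h2 : eA.symm ⟨A.orderEmbOfFin hA k, hmem⟩ = k := by
      apply eA.injective
      simp only [Equiv.apply_symm_apply]
      apply Subtype.ext
      simp [eA, Finset.coe_orderIsoOfFin_apply]
    simp only [σ, Equiv.trans_apply, h1, Equiv.sumCongr_apply, Sum.map_inl, Equiv.trans_apply, h2]
    simp [eA', Equiv.sumCompl_apply_inl, Finset.coe_orderIsoOfFin_apply]
  have fact2 : ∀ i : Fin l, i ∉ A → σ i ∉ A' := by
    intro i hi
    have h1 : (Equiv.sumCompl (· ∈ A)).symm i = Sum.inr ⟨i, hi⟩ :=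
      Equiv.sumCompl_symm_apply_of_neg hi
    simp only [σ, Equiv.trans_apply, h1, Equiv.sumCongr_apply, Sum.map_inr]
    exact (eC' ⟨i, hi⟩).2
  have fact3 : ∀ i : Fin l, i ∈ A → σ i ∈ A' ∧ c' (σ i) = c i := by
    intro i hi
    have : i ∈ Set.range (A.orderEmbOfFin hA) := by
      rw [Finset.range_orderEmbOfFin]; exact hi
    obtain ⟨k, rfl⟩ := this
    rw [fact1 k]
    exact ⟨Finset.orderEmbOfFin_mem A' hA' k, (hval k).symm⟩
  -- change of variables
  let w : (Fin l → ℝ) → (Fin l → ℝ) := fun u => fun i => if i ∈ A' then c' i else u i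
  have key : ∀ z : Fin l → ℝ,
      h (fun i => if i ∈ A then c i else z i) = h (w (z ∘ σ.symm)) := by
    intro z
    rw [← hsym σ (w (z ∘ σ.symm))]
    congr 1
    funext i
    by_cases hi : i ∈ A
    · simp only [Function.comp_apply, w, if_pos hi, if_pos (fact3 i hi).1, (fact3 i hi).2]
    · simp only [Function.comp_apply, w, if_neg hi, if_neg (fact2 i hi),
        Equiv.symm_apply_apply]
  let Φ := MeasurableEquiv.piCongrLeft (fun _ : Fin l => ℝ) σ
  have hΦ : ∀ z : Fin l → ℝ, Φ z = z ∘ σ.symm := by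
    intro z
    funext b
    have h1 := MeasurableEquiv.piCongrLeft_apply_apply (β := fun _ : Fin l => ℝ) σ z (σ.symm b)
    simpa [Equiv.apply_symm_apply] using h1
  calc Fk P h c A = ∫ z : Fin l → ℝ, h (w (Φ z)) ∂(Measure.pi fun _ => P) := by
        unfold Fk
        refine integral_congr_ae (Filter.Eventually.of_forall fun z => ?_)
        dsimp only
        rw [key z, hΦ z]
    _ = ∫ u : Fin l → ℝ, h (w u) ∂(Measure.pi fun _ => P) :=
        (measurePreserving_piCongrLeft (fun _ : Fin l => P) σ).integral_comp'
          (fun u => h (w u))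
    _ = Fk P h c' A' := rfl

noncomputable def gT {l n : ℕ} (P : Measure ℝ) (h : (Fin l → ℝ) → ℝ)
    (y : Fin n → ℝ) (T : Finset (Fin n)) : ℝ :=
  ∫ z : Fin l → ℝ,
    h (fun i => if h' : (i : ℕ) < T.card then y (T.orderEmbOfFin rfl ⟨i, h'⟩) else z i)
    ∂(Measure.pi fun _ => P)

lemma filter_lt_card {l t : ℕ} (ht : t ≤ l) :
    ((Finset.univ : Finset (Fin l)).filter fun i : Fin l => (i : ℕ) < t).card = t := by
  have : ((Finset.univ : Finset (Fin l)).filter fun i : Fin l => (i : ℕ) < t)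
      = Finset.map (Fin.castLEEmb ht) Finset.univ := by
    ext i
    simp only [mem_filter, mem_univ, true_and, mem_map]
    constructor
    · intro hi
      exact ⟨⟨(i : ℕ), hi⟩, Fin.ext rfl⟩
    · rintro ⟨k, rfl⟩
      exact k.isLt
  rw [this, card_map, card_univ, Fintype.card_fin]

lemma filter_lt_orderEmbOfFin {l t : ℕ} (ht : t ≤ l) (hc : _) (k : Fin t) :
    ((Finset.univ : Finset (Fin l)).filter fun i : Fin l => (i : ℕ) < t).orderEmbOfFin hc k
      = Fin.castLE ht k := by
  have := Finset.orderEmbOfFin_unique hc (f := fun k : Fin t => Fin.castLE ht k)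
    (fun x => by
      simp only [mem_filter, mem_univ, true_and, Fin.coe_castLE]
      exact x.isLt)
    (fun a b hab => by simpa only [Fin.lt_def, Fin.coe_castLE] using hab)
  exact (congrFun this k).symm

lemma gT_eq_Fk {l n : ℕ} (P : Measure ℝ) (h : (Fin l → ℝ) → ℝ)
    (y : Fin n → ℝ) (T : Finset (Fin n)) :
    gT P h y T = Fk P h
      (fun i => if h' : (i : ℕ) < T.card then y (T.orderEmbOfFin rfl ⟨i, h'⟩) else 0)
      ((Finset.univ : Finset (Fin l)).filter fun i : Fin l => (i : ℕ) < T.card) := by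
  unfold gT Fk
  refine integral_congr_ae (Filter.Eventually.of_forall fun z => ?_)
  dsimp only
  congr 1
  funext i
  by_cases h' : (i : ℕ) < T.card
  · simp [h']
  · simp [h']

lemma gT_card_l {l n : ℕ} (P : Measure ℝ) [IsProbabilityMeasure P]
    (h : (Fin l → ℝ) → ℝ) (y : Fin n → ℝ) {J : Finset (Fin n)} (hJ : J.card = l) :
    gT P h y J = h (fun i => y (J.orderEmbOfFin hJ i)) := by
  unfold gT
  have : ∀ z : Fin l → ℝ,
      (fun i : Fin l => if h' : (i : ℕ) < J.card then y (J.orderEmbOfFin rfl ⟨i, h'⟩) else z i)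
        = fun i => y (J.orderEmbOfFin hJ i) := by
    intro z
    funext i
    have h' : (i : ℕ) < J.card := hJ ▸ i.isLt
    rw [dif_pos h']
    congr 1
  simp only [this]
  rw [integral_const, probReal_univ, one_smul]

lemma gT_empty {l n : ℕ} (P : Measure ℝ) (h : (Fin l → ℝ) → ℝ) (y : Fin n → ℝ) :
    gT P h y ∅ = ∫ x, h x ∂(Measure.pi fun _ : Fin l => P) := by
  unfold gT
  simp

lemma powerset_map' {α β : Type*} [DecidableEq α] [DecidableEq β] (f : α ↪ β) (s : Finset α) :
    (s.map f).powerset = s.powerset.map ⟨fun u => u.map f, fun u v huv => Finset.map_injective f huv⟩ := by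
  ext T
  simp only [mem_powerset, mem_map, Function.Embedding.coeFn_mk]
  constructor
  · intro hT
    obtain ⟨u, hu, rfl⟩ := Finset.subset_map_iff.mp hT
    exact ⟨u, hu, rfl⟩
  · rintro ⟨u, hu, rfl⟩
    exact map_subset_map.mpr hu

lemma hoeffdingProj_expand {l n : ℕ} (P : Measure ℝ) [IsProbabilityMeasure P]
    (h : (Fin l → ℝ) → ℝ)
    (hsym : ∀ (σ : Equiv.Perm (Fin l)) (x : Fin l → ℝ), h (x ∘ σ) = h x)
    {j : ℕ} (hjl : j ≤ l) (S : Finset (Fin n)) (hS : S.card = j) (y : Fin n → ℝ) :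
    hoeffdingProj P h j (fun k => y (S.orderEmbOfFin hS k))
      = ∑ T ∈ S.powerset, (-1 : ℝ) ^ (j - T.card) * gT P h y T := by
  classical
  have hSmap : S = Finset.map (S.orderEmbOfFin hS).toEmbedding Finset.univ := by
    ext x
    simp only [mem_map, RelEmbedding.coe_toEmbedding, mem_univ, true_and]
    constructor
    · intro hx
      have : x ∈ Set.range (S.orderEmbOfFin hS) := by
        rw [Finset.range_orderEmbOfFin]; exact hx
      obtain ⟨k, hk⟩ := this; exact ⟨k, hk⟩
    · rintro ⟨k, rfl⟩; exact Finset.orderEmbOfFin_mem S hS k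
  conv_rhs => rw [hSmap, powerset_map', sum_map]
  unfold hoeffdingProj
  refine Finset.sum_congr rfl fun S' _ => ?_
  show _ = (-1 : ℝ) ^ (j - (S'.map (S.orderEmbOfFin hS).toEmbedding).card) *
    gT P h y (S'.map (S.orderEmbOfFin hS).toEmbedding)
  rw [card_map]
  congr 1
  -- now the integral equality
  have htj : S'.card ≤ j := by
    have := card_le_card (subset_univ S')
    simpa [card_univ] using this
  have htl : S'.card ≤ l := le_trans htj hjl
  set T : Finset (Fin n) := S'.map (S.orderEmbOfFin hS).toEmbedding with hTdef
  have hTcard : T.card = S'.card := card_map _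
  set A₁ : Finset (Fin l) := S'.map (Fin.castLEEmb hjl) with hA₁def
  have hA₁ : A₁.card = S'.card := card_map _
  set c₁ : Fin l → ℝ := fun i => if h' : (i : ℕ) < j then
      (if (⟨i, h'⟩ : Fin j) ∈ S' then y (S.orderEmbOfFin hS ⟨i, h'⟩) else 0) else 0 with hc₁def
  have hL : (∫ z : Fin l → ℝ,
      h (fun i => if h' : (i : ℕ) < j then
        (if (⟨i, h'⟩ : Fin j) ∈ S' then (fun k => y (S.orderEmbOfFin hS k)) ⟨i, h'⟩ else z i)
        else z i) ∂(Measure.pi fun _ => P)) = Fk P h c₁ A₁ := by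
    unfold Fk
    refine integral_congr_ae (Filter.Eventually.of_forall fun z => ?_)
    dsimp only
    congr 1
    funext i
    by_cases h' : (i : ℕ) < j
    · by_cases hS' : (⟨i, h'⟩ : Fin j) ∈ S'
      · have hiA : i ∈ A₁ := by
          rw [hA₁def]
          exact mem_map.mpr ⟨⟨i, h'⟩, hS', Fin.ext rfl⟩
        rw [dif_pos h', if_pos hS', if_pos hiA, hc₁def]
        dsimp only
        rw [dif_pos h', if_pos hS']
      · have hiA : i ∉ A₁ := by
          rw [hA₁def]
          intro hmem
          obtain ⟨k, hk, hki⟩ := mem_map.mp hmem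
          have : k = (⟨i, h'⟩ : Fin j) := Fin.ext (by
            simpa using congrArg Fin.val hki)
          exact hS' (this ▸ hk)
        rw [dif_pos h', if_neg hS', if_neg hiA]
    · have hiA : i ∉ A₁ := by
        rw [hA₁def]
        intro hmem
        obtain ⟨k, hk, hki⟩ := mem_map.mp hmem
        apply h'
        rw [← hki]
        exact k.isLt
      rw [dif_neg h', if_neg hiA]
  rw [hL, gT_eq_Fk P h y T]
  have hA₂ : ((Finset.univ : Finset (Fin l)).filter fun i : Fin l => (i : ℕ) < T.card).card
      = S'.card := by rw [hTcard]; exact filter_lt_card htl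
  refine Fk_congr P h hsym hA₁ hA₂ ?_
  intro k
  -- compute both orderEmbOfFin
  have hembA₁ : A₁.orderEmbOfFin hA₁ k = Fin.castLE hjl (S'.orderEmbOfFin rfl k) := by
    have := Finset.orderEmbOfFin_unique hA₁
      (f := fun k : Fin S'.card => Fin.castLE hjl (S'.orderEmbOfFin rfl k))
      (fun x => by
        rw [hA₁def]
        exact mem_map.mpr ⟨S'.orderEmbOfFin rfl x, Finset.orderEmbOfFin_mem _ _ _, rfl⟩)
      (fun a b hab => by
        simp only [Fin.lt_def, Fin.coe_castLE]
        exact (S'.orderEmbOfFin rfl).strictMono hab)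
    exact (congrFun this k).symm
  have hembA₂ : ((Finset.univ : Finset (Fin l)).filter
        fun i : Fin l => (i : ℕ) < T.card).orderEmbOfFin hA₂ k = Fin.castLE htl k := by
    have := Finset.orderEmbOfFin_unique hA₂
      (f := fun k : Fin S'.card => Fin.castLE htl k)
      (fun x => by
        simp only [mem_filter, mem_univ, true_and, Fin.coe_castLE, hTcard]
        exact x.isLt)
      (fun a b hab => by simpa only [Fin.lt_def, Fin.coe_castLE] using hab)
    exact (congrFun this k).symm
  rw [hembA₁, hembA₂, hc₁def]
  dsimp only
  have h1 : ((Fin.castLE hjl (S'.orderEmbOfFin rfl k) : Fin l) : ℕ) < j :=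
    (S'.orderEmbOfFin rfl k).isLt
  rw [dif_pos h1]
  have h2 : (⟨(Fin.castLE hjl (S'.orderEmbOfFin rfl k) : Fin l), h1⟩ : Fin j)
      = S'.orderEmbOfFin rfl k := Fin.ext rfl
  rw [h2, if_pos (Finset.orderEmbOfFin_mem _ _ _)]
  have h3 : ((Fin.castLE htl k : Fin l) : ℕ) < T.card := by
    rw [hTcard]; exact k.isLt
  rw [dif_pos h3]
  congr 1
  have h4 : T.orderEmbOfFin hTcard = fun m : Fin S'.card =>
      S.orderEmbOfFin hS (S'.orderEmbOfFin rfl m) := by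
    symm
    exact Finset.orderEmbOfFin_unique hTcard
      (f := fun m : Fin S'.card => S.orderEmbOfFin hS (S'.orderEmbOfFin rfl m))
      (fun x => by
        rw [hTdef]
        exact mem_map_of_mem _ (Finset.orderEmbOfFin_mem _ _ _))
      ((S.orderEmbOfFin hS).strictMono.comp (S'.orderEmbOfFin rfl).strictMono)
  have h5 : T.orderEmbOfFin rfl ⟨((Fin.castLE htl k : Fin l) : ℕ), h3⟩
      = T.orderEmbOfFin hTcard k := orderEmbOfFin_congr' T rfl hTcard rfl
  rw [h5, h4]

lemma alt_sum_real (m : ℕ) :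
    ∑ i ∈ range (m + 1), (-1 : ℝ) ^ i * (m.choose i : ℝ) = if m = 0 then 1 else 0 := by
  have h2 := congrArg (fun z : ℤ => (z : ℝ)) (Int.alternating_sum_range_choose (n := m))
  push_cast at h2
  rw [h2]

lemma count_supersets {n : ℕ} (T : Finset (Fin n)) {j : ℕ} (hT : T.card ≤ j) :
    (((Finset.univ : Finset (Fin n)).powersetCard j).filter fun S => T ⊆ S).card
      = (n - T.card).choose (j - T.card) := by
  classical
  have hcard : ((Finset.univ : Finset (Fin n)) \ T).card = n - T.card := by
    rw [card_sdiff_of_subset (subset_univ T), card_univ, Fintype.card_fin]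
  rw [← hcard, ← Finset.card_powersetCard]
  refine Finset.card_bij (fun S _ => S \ T) ?_ ?_ ?_
  · intro S hS
    obtain ⟨hS1, hS2⟩ := mem_filter.mp hS
    obtain ⟨-, hScard⟩ := mem_powersetCard.mp hS1
    exact mem_powersetCard.mpr ⟨sdiff_subset_sdiff (subset_univ S) le_rfl,
      by rw [card_sdiff_of_subset hS2, hScard]⟩
  · intro S₁ hS₁ S₂ hS₂ heq
    obtain ⟨-, h₁⟩ := mem_filter.mp hS₁
    obtain ⟨-, h₂⟩ := mem_filter.mp hS₂
    have heq' : S₁ \ T = S₂ \ T := heq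
    rw [← sdiff_union_of_subset h₁, ← sdiff_union_of_subset h₂, heq']
  · intro U hU
    obtain ⟨hU1, hU2⟩ := mem_powersetCard.mp hU
    have hdisj : Disjoint U T := by
      refine disjoint_left.mpr fun x hxU hxT => ?_
      exact (mem_sdiff.mp (hU1 hxU)).2 hxT
    refine ⟨U ∪ T, mem_filter.mpr ⟨mem_powersetCard.mpr ⟨subset_univ _, ?_⟩,
      subset_union_right⟩, ?_⟩
    · rw [card_union_of_disjoint hdisj, hU2]
      omega
    · show (U ∪ T) \ T = U
      simp [union_sdiff_distrib, sdiff_self, Finset.sdiff_eq_self_iff_disjoint.mpr hdisj, hdisj]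

lemma comb {n l : ℕ} (hl : 0 < l) (hln : l ≤ n) (a : Finset (Fin n) → ℝ) :
    ∑ j ∈ Icc 1 l, ((l.choose j : ℝ) / (n.choose j : ℝ)) *
        ∑ S ∈ (Finset.univ : Finset (Fin n)).powersetCard j,
          ∑ T ∈ S.powerset, (-1 : ℝ) ^ (j - T.card) * a T
    = (1 / (n.choose l : ℝ)) * ∑ J ∈ (Finset.univ : Finset (Fin n)).powersetCard l, a J
      - a ∅ := by
  classical
  have hswap : ∀ j : ℕ,
      ∑ S ∈ (Finset.univ : Finset (Fin n)).powersetCard j,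
          ∑ T ∈ S.powerset, (-1 : ℝ) ^ (j - T.card) * a T
      = ∑ T ∈ (Finset.univ : Finset (Fin n)).powerset,
          (((((Finset.univ : Finset (Fin n)).powersetCard j).filter
              fun S => T ⊆ S).card : ℝ)) * ((-1 : ℝ) ^ (j - T.card) * a T) := by
    intro j
    rw [Finset.sum_comm' (s := (Finset.univ : Finset (Fin n)).powersetCard j)
        (t := fun S => S.powerset) (t' := (Finset.univ : Finset (Fin n)).powerset)
        (s' := fun T => ((Finset.univ : Finset (Fin n)).powersetCard j).filter
          fun S => T ⊆ S)
        (by intro S T; simp only [mem_powerset, mem_filter, subset_univ, and_true])]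
    exact sum_congr rfl fun T _ => by rw [sum_const, nsmul_eq_mul]
  simp only [hswap, Finset.mul_sum]
  rw [Finset.sum_comm]
  have hcoeff : ∀ T : Finset (Fin n),
      (∑ j ∈ Icc 1 l, ((l.choose j : ℝ) / (n.choose j : ℝ)) *
          ((((((Finset.univ : Finset (Fin n)).powersetCard j).filter
            fun S => T ⊆ S).card : ℝ)) * ((-1 : ℝ) ^ (j - T.card) * a T)))
      = (if T.card = l then 1 / (n.choose l : ℝ) else if T.card = 0 then -1 else 0) * a T := by
    intro T
    have key : (∑ j ∈ Icc 1 l, ((l.choose j : ℝ) / (n.choose j : ℝ)) *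
          ((((((Finset.univ : Finset (Fin n)).powersetCard j).filter
            fun S => T ⊆ S).card : ℝ)) * ((-1 : ℝ) ^ (j - T.card) * a T)))
        = (∑ j ∈ Icc 1 l, ((l.choose j : ℝ) / (n.choose j : ℝ)) *
            (((((Finset.univ : Finset (Fin n)).powersetCard j).filter
              fun S => T ⊆ S).card : ℝ)) * (-1 : ℝ) ^ (j - T.card)) * a T := by
      rw [sum_mul]
      exact sum_congr rfl fun j _ => by ring
    rw [key]
    congr 1
    -- now evaluate the coefficient
    by_cases ht0 : T.card = 0
    · have hTe : T = ∅ := card_eq_zero.mp ht0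
      subst hTe
      have hcnt : ∀ j, ((((Finset.univ : Finset (Fin n)).powersetCard j).filter
          fun S => (∅ : Finset (Fin n)) ⊆ S).card) = n.choose j := by
        intro j
        rw [filter_true_of_mem (fun S _ => empty_subset S), Finset.card_powersetCard,
          card_univ, Fintype.card_fin]
      simp only [hcnt, card_empty, Nat.sub_zero]
      have hne : ¬ ((0 : ℕ) = l) := fun hh => hl.ne' hh.symm
      rw [if_neg hne]
      simp only [if_true]
      have hterm : ∀ j ∈ Icc 1 l, ((l.choose j : ℝ) / (n.choose j : ℝ)) * (n.choose j : ℝ)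
          * (-1 : ℝ) ^ j = (-1 : ℝ) ^ j * (l.choose j : ℝ) := by
        intro j hj
        obtain ⟨-, hjl⟩ := mem_Icc.mp hj
        have hnj : (n.choose j : ℝ) ≠ 0 :=
          Nat.cast_ne_zero.mpr (Nat.choose_pos (le_trans hjl hln)).ne'
        field_simp
      rw [sum_congr rfl hterm]
      have hins : insert 0 (Icc 1 l) = range (l + 1) := by
        ext x; simp [Nat.lt_succ_iff]; omega
      have h0 : (0 : ℕ) ∉ Icc 1 l := by simp
      have := alt_sum_real l
      rw [← hins, sum_insert h0] at this
      simp only [pow_zero, Nat.choose_zero_right, Nat.cast_one, one_mul,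
        if_neg hl.ne'] at this
      linarith [this]
    · by_cases htl' : T.card ≤ l
      · have h1t : 1 ≤ T.card := Nat.one_le_iff_ne_zero.mpr ht0
        have htn : T.card ≤ n := le_trans htl' hln
        have hsub : Icc T.card l ⊆ Icc 1 l := Icc_subset_Icc h1t le_rfl
        have hzero : ∀ j ∈ Icc 1 l, j ∉ Icc T.card l →
            ((l.choose j : ℝ) / (n.choose j : ℝ)) *
              (((((Finset.univ : Finset (Fin n)).powersetCard j).filter
                fun S => T ⊆ S).card : ℝ)) * (-1 : ℝ) ^ (j - T.card) = 0 := by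
          intro j hj hj'
          obtain ⟨hj1, hjl⟩ := mem_Icc.mp hj
          have hjt : j < T.card := by
            simp only [mem_Icc, not_and, not_le] at hj'
            omega
          have : (((Finset.univ : Finset (Fin n)).powersetCard j).filter
              fun S => T ⊆ S) = ∅ := by
            refine filter_eq_empty_iff.mpr fun S hS => ?_
            obtain ⟨-, hScard⟩ := mem_powersetCard.mp hS
            intro hTS
            have := card_le_card hTS
            omega
          rw [this]
          simp
        rw [← Finset.sum_subset hsub hzero]
        have hterm : ∀ j ∈ Icc T.card l,
            ((l.choose j : ℝ) / (n.choose j : ℝ)) *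
              (((((Finset.univ : Finset (Fin n)).powersetCard j).filter
                fun S => T ⊆ S).card : ℝ)) * (-1 : ℝ) ^ (j - T.card)
            = ((l.choose T.card : ℝ) / (n.choose T.card : ℝ)) *
                (((l - T.card).choose (j - T.card) : ℝ)) * (-1 : ℝ) ^ (j - T.card) := by
          intro j hj
          obtain ⟨htj, hjl⟩ := mem_Icc.mp hj
          have hjn : j ≤ n := le_trans hjl hln
          rw [count_supersets T htj]
          congr 1
          have e1 : (n.choose j : ℝ) * (j.choose T.card : ℝ)
              = (n.choose T.card : ℝ) * ((n - T.card).choose (j - T.card) : ℝ) := by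
            exact_mod_cast congrArg (Nat.cast : ℕ → ℝ) (Nat.choose_mul (n := n) htj)
          have e2 : (l.choose j : ℝ) * (j.choose T.card : ℝ)
              = (l.choose T.card : ℝ) * ((l - T.card).choose (j - T.card) : ℝ) := by
            exact_mod_cast congrArg (Nat.cast : ℕ → ℝ) (Nat.choose_mul (n := l) htj)
          have hnj : (n.choose j : ℝ) ≠ 0 :=
            Nat.cast_ne_zero.mpr (Nat.choose_pos hjn).ne'
          have hnt : (n.choose T.card : ℝ) ≠ 0 :=
            Nat.cast_ne_zero.mpr (Nat.choose_pos htn).ne'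
          rw [div_mul_eq_mul_div, div_mul_eq_mul_div, div_eq_div_iff hnj hnt]
          linear_combination ((n.choose j : ℝ)) * e2 - ((l.choose j : ℝ)) * e1
        rw [sum_congr rfl hterm]
        have hreindex : ∑ j ∈ Icc T.card l,
            ((l.choose T.card : ℝ) / (n.choose T.card : ℝ)) *
              (((l - T.card).choose (j - T.card) : ℝ)) * (-1 : ℝ) ^ (j - T.card)
            = ((l.choose T.card : ℝ) / (n.choose T.card : ℝ)) *
              ∑ m ∈ range (l - T.card + 1), (-1 : ℝ) ^ m * (((l - T.card).choose m : ℝ)) := by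
          rw [Finset.mul_sum]
          rw [show Icc T.card l = Ico T.card (l + 1) by rfl]
          rw [Finset.sum_Ico_eq_sum_range]
          have : l + 1 - T.card = l - T.card + 1 := by omega
          rw [this]
          refine sum_congr rfl fun m _ => ?_
          have : T.card + m - T.card = m := by omega
          rw [this]
          ring
        rw [hreindex, alt_sum_real (l - T.card)]
        by_cases htl2 : T.card = l
        · subst htl2
          simp
        · have : l - T.card ≠ 0 := by omega
          rw [if_neg this, if_neg htl2, if_neg ht0]
          ring
      · -- T.card > l
        have : ∀ j ∈ Icc 1 l,
            ((l.choose j : ℝ) / (n.choose j : ℝ)) *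
              (((((Finset.univ : Finset (Fin n)).powersetCard j).filter
                fun S => T ⊆ S).card : ℝ)) * (-1 : ℝ) ^ (j - T.card) = 0 := by
          intro j hj
          obtain ⟨-, hjl⟩ := mem_Icc.mp hj
          have : (((Finset.univ : Finset (Fin n)).powersetCard j).filter
              fun S => T ⊆ S) = ∅ := by
            refine filter_eq_empty_iff.mpr fun S hS => ?_
            obtain ⟨-, hScard⟩ := mem_powersetCard.mp hS
            intro hTS
            have := card_le_card hTS
            omega
          rw [this]
          simp
        rw [sum_eq_zero this]
        have h1 : ¬ T.card = l := by omega
        rw [if_neg h1, if_neg ht0]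
    -- end coefficient
  rw [sum_congr rfl fun T _ => hcoeff T]
  -- final: split the powerset sum by cardinality
  have hps := Finset.sum_powerset (Finset.univ : Finset (Fin n))
    (fun T => (if T.card = l then 1 / (n.choose l : ℝ) else if T.card = 0 then -1 else 0) * a T)
  rw [hps]
  have hcardu : (Finset.univ : Finset (Fin n)).card = n := by
    rw [card_univ, Fintype.card_fin]
  rw [hcardu]
  have hinner : ∀ j ∈ range (n + 1),
      ∑ T ∈ (Finset.univ : Finset (Fin n)).powersetCard j,
        (if T.card = l then 1 / (n.choose l : ℝ) else if T.card = 0 then -1 else 0) * a T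
      = (if j = l then (1 / (n.choose l : ℝ)) *
            ∑ T ∈ (Finset.univ : Finset (Fin n)).powersetCard j, a T else 0)
        + (if j = 0 then - ∑ T ∈ (Finset.univ : Finset (Fin n)).powersetCard j, a T else 0) := by
    intro j hj
    have hTc : ∀ T ∈ (Finset.univ : Finset (Fin n)).powersetCard j, T.card = j :=
      fun T hT => (mem_powersetCard.mp hT).2
    rw [sum_congr rfl fun T hT => by rw [hTc T hT]]
    by_cases hjl : j = l
    · subst hjl
      rw [if_pos rfl, if_pos rfl, if_neg hl.ne', add_zero, Finset.mul_sum]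
    · by_cases hj0 : j = 0
      · subst hj0
        have hne : ¬ ((0 : ℕ) = l) := hjl
        rw [if_neg hne, if_pos rfl, if_neg hne, if_pos rfl, zero_add, ← Finset.sum_neg_distrib]
        exact sum_congr rfl fun T _ => by ring
      · rw [if_neg hjl, if_neg hj0, if_neg hjl, if_neg hj0, add_zero, sum_eq_zero]
        intro T _
        ring
  rw [sum_congr rfl hinner, sum_add_distrib]
  rw [Finset.sum_ite_eq' (range (n + 1)) l
    (fun j => (1 / (n.choose l : ℝ)) * ∑ T ∈ (Finset.univ : Finset (Fin n)).powersetCard j, a T)]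
  rw [Finset.sum_ite_eq' (range (n + 1)) 0
    (fun j => - ∑ T ∈ (Finset.univ : Finset (Fin n)).powersetCard j, a T)]
  rw [if_pos (mem_range.mpr (by omega)), if_pos (mem_range.mpr (by omega))]
  rw [Finset.powersetCard_zero, sum_singleton, Finset.mul_sum]
  ring

/-- Hoeffding decomposition of the U-statistic: for `P^n`-a.e. `y`,
`U_{n,l}(h)(y) − E h = Σ_{j=1}^{l} [C(l,j)/C(n,j)] Σ_{|J|=j} h^{(j)}(y_i, i ∈ J)`. -/
theorem hoeffding_decomposition
    (P : Measure ℝ) [IsProbabilityMeasure P]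
    (n l : ℕ) (hl : 0 < l) (hln : l ≤ n)
    (h : (Fin l → ℝ) → ℝ) (hmeas : Measurable h)
    (hint : Integrable h (Measure.pi fun _ : Fin l => P))
    (hsym : ∀ (σ : Equiv.Perm (Fin l)) (x : Fin l → ℝ), h (x ∘ σ) = h x) :
    ∀ᵐ y ∂(Measure.pi fun _ : Fin n => P),
      (1 / (n.choose l : ℝ)) *
          ∑ J ∈ (Finset.univ.powersetCard l : Finset (Finset (Fin n))).attach,
            h (fun i => y ((J.1.orderIsoOfFin
              ((Finset.mem_powersetCard.mp J.2).2) i : Fin n)))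
        - ∫ x, h x ∂(Measure.pi fun _ : Fin l => P)
      = ∑ j ∈ Finset.Icc 1 l,
          ((l.choose j : ℝ) / (n.choose j : ℝ)) *
            ∑ J ∈ (Finset.univ.powersetCard j : Finset (Finset (Fin n))).attach,
              hoeffdingProj P h j
                (fun i => y ((J.1.orderIsoOfFin
                  ((Finset.mem_powersetCard.mp J.2).2) i : Fin n))) := by
  refine MeasureTheory.ae_of_all _ fun y => ?_
  have hU : ∑ J ∈ (Finset.univ.powersetCard l : Finset (Finset (Fin n))).attach,
      h (fun i => y ((J.1.orderIsoOfFin ((Finset.mem_powersetCard.mp J.2).2) i : Fin n)))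
      = ∑ J ∈ (Finset.univ.powersetCard l : Finset (Finset (Fin n))), gT P h y J := by
    rw [← Finset.sum_attach (Finset.univ.powersetCard l) (fun J => gT P h y J)]
    refine Finset.sum_congr rfl fun J _ => ?_
    rw [gT_card_l P h y ((Finset.mem_powersetCard.mp J.2).2)]
    congr 1
  have hRHS : ∑ j ∈ Finset.Icc 1 l,
      ((l.choose j : ℝ) / (n.choose j : ℝ)) *
        ∑ J ∈ (Finset.univ.powersetCard j : Finset (Finset (Fin n))).attach,
          hoeffdingProj P h j
            (fun i => y ((J.1.orderIsoOfFin
              ((Finset.mem_powersetCard.mp J.2).2) i : Fin n)))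
      = ∑ j ∈ Finset.Icc 1 l,
          ((l.choose j : ℝ) / (n.choose j : ℝ)) *
            ∑ S ∈ (Finset.univ : Finset (Fin n)).powersetCard j,
              ∑ T ∈ S.powerset, (-1 : ℝ) ^ (j - T.card) * gT P h y T := by
    refine Finset.sum_congr rfl fun j hj => ?_
    congr 1
    rw [← Finset.sum_attach ((Finset.univ : Finset (Fin n)).powersetCard j)
      (fun S => ∑ T ∈ S.powerset, (-1 : ℝ) ^ (j - T.card) * gT P h y T)]
    refine Finset.sum_congr rfl fun J _ => ?_
    have hjl : j ≤ l := (Finset.mem_Icc.mp hj).2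
    have hexp := hoeffdingProj_expand P h hsym hjl J.1
      ((Finset.mem_powersetCard.mp J.2).2) y
    rw [← hexp]
    congr 1
  rw [hU, hRHS, ← gT_empty P h y]
  exact (comb hl hln (gT P h y)).symm
end

section
/- Suppose for each j with 2 ≤ j ≤ l, a random variable T_j satisfies P(|T_j| ≥ s_j) ≤ exp(−c·min((t ε²)^{1/j}(n/l)^{(j−1)/j}, (tε²/B²)^{1/(j+1)}(nj/l²)^{j/(j+1)})) for constants c, B > 0. If l·log²(l) ≪ n/l, ε ≫ log^{−1/2}(l), and t < (n/l²)·ε⁴, then Σ_{j=2}^l P(|T_j| ≥ s_j) ≤ exp(−c₂ t/ε) for some constant c₂ > 0 and all l large enough. -/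
private lemma pow_split₁ (a b : ℝ) (ha : 0 ≤ a) (hb : 0 ≤ b) (j : ℕ) (hj : 1 ≤ j) :
    (a ^ ((1:ℝ)/j) * b ^ (((j:ℝ)-1)/j)) ^ j = a * b ^ (j - 1) := by
  have hj0 : (j:ℝ) ≠ 0 := Nat.cast_ne_zero.mpr (by omega)
  rw [mul_pow, ← Real.rpow_natCast (a ^ ((1:ℝ)/j)) j,
    ← Real.rpow_natCast (b ^ (((j:ℝ)-1)/j)) j,
    ← Real.rpow_mul ha, ← Real.rpow_mul hb, one_div_mul_cancel hj0,
    div_mul_cancel₀ _ hj0, Real.rpow_one]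
  congr 1
  rw [show ((j:ℝ) - 1) = ((j - 1 : ℕ) : ℝ) by rw [Nat.cast_sub hj, Nat.cast_one],
    Real.rpow_natCast]

private lemma pow_split₂ (a b : ℝ) (ha : 0 ≤ a) (hb : 0 ≤ b) (j : ℕ) :
    (a ^ ((1:ℝ)/((j:ℝ)+1)) * b ^ ((j:ℝ)/((j:ℝ)+1))) ^ (j+1) = a * b ^ j := by
  have hj0 : ((j:ℝ)+1) ≠ 0 := by positivity
  rw [mul_pow, ← Real.rpow_natCast (a ^ ((1:ℝ)/((j:ℝ)+1))) (j+1),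
    ← Real.rpow_natCast (b ^ ((j:ℝ)/((j:ℝ)+1))) (j+1),
    ← Real.rpow_mul ha, ← Real.rpow_mul hb]
  push_cast
  rw [one_div_mul_cancel hj0, div_mul_cancel₀ _ hj0, Real.rpow_one, Real.rpow_natCast]

set_option maxHeartbeats 1000000 in
private lemma sideA {D K lg T e L N : ℝ} (j : ℕ) (hj : 2 ≤ j)
    (he0 : 0 < e) (he1 : e ≤ 1) (hT0 : 0 < T) (hL0 : 0 < L) (hL1 : 1 ≤ L)
    (hD1 : 1 ≤ D) (hK0 : 0 < K) (hlg1 : 1 ≤ lg) (hN0 : 0 < N)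
    (hNL1 : T * L / e^4 ≤ N / L)
    (hKD : D^2 ≤ K)
    (hNL2 : K * (L * lg^2) ≤ N / L)
    (hx2L : 2 / L ≤ T * e^2) :
    Real.sqrt L * (T/e) ≤ (T * e^2) ^ ((1:ℝ)/j) * (N / L) ^ (((j:ℝ)-1)/j)
    ∧ D * lg ≤ (T * e^2) ^ ((1:ℝ)/j) * (N / L) ^ (((j:ℝ)-1)/j) := by
  obtain ⟨k, rfl⟩ : ∃ k, j = k + 2 := ⟨j - 2, by omega⟩
  have hx0 : (0:ℝ) < T * e^2 := mul_pos hT0 (pow_pos he0 2)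
  have hNL0 : (0:ℝ) ≤ N / L := (div_pos hN0 hL0).le
  have hlg0 : (0:ℝ) < lg := lt_of_lt_of_le one_pos hlg1
  constructor
  · apply le_of_pow_le_pow_left₀ (show k+2 ≠ 0 by omega)
      (mul_nonneg (Real.rpow_nonneg hx0.le _) (Real.rpow_nonneg hNL0 _))
    rw [pow_split₁ _ _ hx0.le hNL0 (k+2) (by omega)]
    show (Real.sqrt L * (T/e))^(k+2) ≤ T * e^2 * (N/L)^(k+1)
    have hTL0 : (0:ℝ) ≤ T * L / e^4 := by positivity
    calc (Real.sqrt L * (T/e))^(k+2)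
        ≤ T * e^2 * (T * L / e^4)^(k+1) := ?_
      _ ≤ T * e^2 * (N/L)^(k+1) :=
          mul_le_mul_of_nonneg_left (pow_le_pow_left₀ hTL0 hNL1 _) hx0.le
    have hs1 : (Real.sqrt L)^(k+2) ≤ L^(k+1) := by
      calc (Real.sqrt L)^(k+2) ≤ (Real.sqrt L)^(2*(k+1)) :=
            pow_le_pow_right₀ (Real.one_le_sqrt.mpr hL1) (by omega)
        _ = L^(k+1) := by rw [pow_mul, Real.sq_sqrt hL0.le]
    have hs2 : e^(3*k) ≤ 1 := pow_le_one₀ he0.le he1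
    have hE1 : Real.sqrt L * (T/e) = (Real.sqrt L * T)/e := by ring
    have hE2 : T * e^2 * (T * L / e^4)^(k+1) = (T*e^2*(T*L)^(k+1))/((e^4)^(k+1)) := by
      rw [div_pow]; ring
    rw [hE1, div_pow, hE2, div_le_div_iff₀ (by positivity) (by positivity)]
    calc (Real.sqrt L * T)^(k+2) * (e^4)^(k+1)
        = ((Real.sqrt L)^(k+2) * e^(3*k)) * (T^(k+2) * e^2 * e^(k+2)) := by ring
      _ ≤ (L^(k+1) * 1) * (T^(k+2) * e^2 * e^(k+2)) := by
          apply mul_le_mul_of_nonneg_right (mul_le_mul hs1 hs2 (by positivity) ?_)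
          · positivity
          · exact pow_nonneg (le_trans zero_le_one hL1) _
      _ = T*e^2*(T*L)^(k+1) * e^(k+2) := by ring
  · apply le_of_pow_le_pow_left₀ (show k+2 ≠ 0 by omega)
      (mul_nonneg (Real.rpow_nonneg hx0.le _) (Real.rpow_nonneg hNL0 _))
    rw [pow_split₁ _ _ hx0.le hNL0 (k+2) (by omega)]
    show (D * lg)^(k+2) ≤ T * e^2 * (N/L)^(k+1)
    have hKlg0 : (0:ℝ) ≤ K * (L * lg^2) := by
      exact mul_nonneg hK0.le (mul_nonneg hL0.le (sq_nonneg lg))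
    calc (D * lg)^(k+2)
        ≤ (2/L) * (K * (L * lg^2))^(k+1) := ?_
      _ ≤ (T*e^2) * (N/L)^(k+1) :=
          mul_le_mul hx2L (pow_le_pow_left₀ hKlg0 hNL2 _)
            (pow_nonneg hKlg0 _) hx0.le
    rw [div_mul_eq_mul_div, le_div_iff₀ hL0]
    have hDK : D^(k+2) ≤ K^(k+1) := by
      calc D^(k+2) ≤ D^(2*(k+1)) := pow_le_pow_right₀ hD1 (by omega)
        _ = (D^2)^(k+1) := by rw [pow_mul]
        _ ≤ K^(k+1) := pow_le_pow_left₀ (sq_nonneg D) hKD _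
    have hlgp : lg^(k+2) * L ≤ lg^(2*k+2) * L^(k+1) :=
      mul_le_mul (pow_le_pow_right₀ hlg1 (by omega)) (le_self_pow₀ hL1 (by omega))
        hL0.le (pow_nonneg hlg0.le _)
    have hX0 : (0:ℝ) ≤ K^(k+1) * (lg^(2*k+2) * L^(k+1)) :=
      mul_nonneg (pow_nonneg hK0.le _) (mul_nonneg (pow_nonneg hlg0.le _) (pow_nonneg hL0.le _))
    calc (D*lg)^(k+2) * L = D^(k+2) * (lg^(k+2) * L) := by ring
      _ ≤ K^(k+1) * (lg^(2*k+2) * L^(k+1)) :=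
          mul_le_mul hDK hlgp
            (mul_nonneg (pow_nonneg hlg0.le _) hL0.le)
            (pow_nonneg (le_trans zero_le_one (by nlinarith : (1:ℝ) ≤ K)) _)
      _ ≤ 2*(K * (L * lg^2))^(k+1) := by
          have hq : (K * (L * lg^2))^(k+1) = K^(k+1) * (lg^(2*k+2) * L^(k+1)) := by ring
          rw [hq]; linarith [hX0]


private lemma pow_split₂' (a b : ℝ) (ha : 0 ≤ a) (hb : 0 ≤ b) (j : ℕ) :
    (a ^ ((1:ℝ)/((j:ℝ)+1)) * b ^ ((j:ℝ)/((j:ℝ)+1))) ^ (j+1) = a * b ^ j := by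
  have hj0 : ((j:ℝ)+1) ≠ 0 := by positivity
  rw [mul_pow, ← Real.rpow_natCast (a ^ ((1:ℝ)/((j:ℝ)+1))) (j+1),
    ← Real.rpow_natCast (b ^ ((j:ℝ)/((j:ℝ)+1))) (j+1),
    ← Real.rpow_mul ha, ← Real.rpow_mul hb]
  push_cast
  rw [one_div_mul_cancel hj0, div_mul_cancel₀ _ hj0, Real.rpow_one, Real.rpow_natCast]

set_option maxHeartbeats 1000000 in
private lemma sideB {c B K lg T e L N : ℝ} (j : ℕ) (hj : 2 ≤ j)
    (hc : 0 < c) (hB : 0 < B) (hK1 : 1 ≤ K) (hKB : B^2/c^3 ≤ K^2) (hKc : 1/c ≤ K)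
    (hL0 : 0 < L) (hlg1 : 1 ≤ lg) (he0 : 0 < e) (he1 : e ≤ 1)
    (hT : 2 ≤ T) (hN0 : 0 < N)
    (hxL : T * e^2 * L^2 ≤ N * e^6)
    (hNL2 : K * lg^2 ≤ N / L^2)
    (hεlg : 1 ≤ e^2 * lg) :
    (1 / max 1 B) * (3/2*(T/e)) ≤
        (T * e^2 / B^2) ^ ((1:ℝ)/(j+1)) * ((N * j) / L^2) ^ ((j:ℝ)/(j+1))
    ∧ 2/c*lg ≤ (T * e^2 / B^2) ^ ((1:ℝ)/(j+1)) * ((N * j) / L^2) ^ ((j:ℝ)/(j+1)) := by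
  have hT0 : (0:ℝ) < T := by linarith
  have hlg0 : (0:ℝ) < lg := by linarith
  have hx0 : (0:ℝ) < T * e^2 := mul_pos hT0 (pow_pos he0 2)
  have hjn : 0 < j := by omega
  have hjR : (2:ℝ) ≤ (j:ℝ) := by exact_mod_cast hj
  have hj0R : (0:ℝ) < (j:ℝ) := by linarith
  have hM : (1:ℝ) ≤ max 1 B := le_max_left _ _
  have hM0 : (0:ℝ) < max 1 B := lt_of_lt_of_le one_pos hM
  have hu0 : (0:ℝ) < T * e^2 / B^2 := div_pos hx0 (pow_pos hB 2)
  have hV0 : (0:ℝ) < (N * (j:ℝ)) / L^2 := div_pos (mul_pos hN0 hj0R) (pow_pos hL0 2)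
  have hr0 : (0:ℝ) < (1:ℝ)/((j:ℝ)+1) := by positivity
  have hs0 : (0:ℝ) ≤ (j:ℝ)/((j:ℝ)+1) := by positivity
  -- bound 1 : the (3/2)(T/e) bound
  have hY1 : (3:ℝ)/2*(T/e) ≤ (T * e^2) ^ ((1:ℝ)/((j:ℝ)+1)) * ((N * (j:ℝ)) / L^2) ^ ((j:ℝ)/((j:ℝ)+1)) := by
    apply le_of_pow_le_pow_left₀ (show j+1 ≠ 0 by omega)
      (mul_nonneg (Real.rpow_nonneg hx0.le _) (Real.rpow_nonneg hV0.le _))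
    rw [pow_split₂' _ _ hx0.le hV0.le j]
    obtain ⟨k, rfl⟩ : ∃ k, j = k + 2 := ⟨j - 2, by omega⟩
    have hV : (T*e^2) * ((k+2:ℕ):ℝ) / e^6 ≤ (N * ((k+2:ℕ):ℝ)) / L^2 := by
      rw [div_le_div_iff₀ (pow_pos he0 6) (pow_pos hL0 2)]
      nlinarith [mul_le_mul_of_nonneg_right hxL (Nat.cast_nonneg (k+2) : (0:ℝ) ≤ (k+2:ℕ))]
    have hVl0 : (0:ℝ) ≤ (T*e^2) * ((k+2:ℕ):ℝ) / e^6 := by positivity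
    calc (3/2*(T/e))^(k+2+1)
        ≤ (T*e^2) * ((T*e^2) * ((k+2:ℕ):ℝ) / e^6)^(k+2) := ?_
      _ ≤ (T*e^2) * ((N * ((k+2:ℕ):ℝ)) / L^2)^(k+2) :=
          mul_le_mul_of_nonneg_left (pow_le_pow_left₀ hVl0 hV _) hx0.le
    have h32 : ((3:ℝ)/2)^(k+3) ≤ (((k+2:ℕ):ℝ))^(k+2) := by
      calc ((3:ℝ)/2)^(k+3) = (3/2)^k * (3/2)^3 := by ring
        _ ≤ 2^k * 2^2 :=
            mul_le_mul (pow_le_pow_left₀ (by norm_num) (by norm_num) k) (by norm_num)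
              (by positivity) (by positivity)
        _ = 2^(k+2) := by ring
        _ ≤ (((k+2:ℕ):ℝ))^(k+2) :=
            pow_le_pow_left₀ (by norm_num : (0:ℝ) ≤ 2)
              (by push_cast; linarith [(Nat.cast_nonneg k : (0:ℝ) ≤ k)]) _
    have he31 : e^(3*k+3) ≤ 1 := pow_le_one₀ he0.le he1
    have hE1 : (3:ℝ)/2*(T/e) = (3/2*(T*e^2))/e^3 := by
      field_simp
    have hE2 : (T*e^2) * ((T*e^2) * ((k+2:ℕ):ℝ) / e^6)^(k+2)
        = ((T*e^2)*((T*e^2) * ((k+2:ℕ):ℝ))^(k+2))/((e^6)^(k+2)) := by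
      rw [div_pow]; ring
    rw [hE1, div_pow, hE2, div_le_div_iff₀ (by positivity) (by positivity)]
    calc (3/2*(T*e^2))^(k+2+1) * (e^6)^(k+2)
        = ((3/2)^(k+3) * e^(3*k+3)) * ((T*e^2)^(k+3) * e^(3*k+9)) := by ring
      _ ≤ ((((k+2:ℕ):ℝ))^(k+2) * 1) * ((T*e^2)^(k+3) * e^(3*k+9)) := by
          apply mul_le_mul_of_nonneg_right (mul_le_mul h32 he31 (by positivity) ?_)
          · positivity
          · positivity
      _ = (T*e^2)*((T*e^2) * ((k+2:ℕ):ℝ))^(k+2) * (e^3)^(k+2+1) := by ring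
  -- the factor (B²)^r ≤ max 1 B
  have hBr : (B^2) ^ ((1:ℝ)/((j:ℝ)+1)) ≤ max 1 B := by
    rcases le_total B 1 with hb|hb
    · refine le_trans (Real.rpow_le_one (sq_nonneg B) (by nlinarith) hr0.le) hM
    · have h2r : (B^2:ℝ) ^ ((1:ℝ)/((j:ℝ)+1)) = B ^ (((2:ℕ):ℝ) * ((1:ℝ)/((j:ℝ)+1))) := by
        rw [← Real.rpow_natCast B 2, ← Real.rpow_mul hB.le]
      rw [h2r]
      have hexp : ((2:ℕ):ℝ) * ((1:ℝ)/((j:ℝ)+1)) ≤ 1 := by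
        rw [mul_one_div, div_le_one (by positivity)]
        push_cast; linarith
      calc B ^ (((2:ℕ):ℝ) * ((1:ℝ)/((j:ℝ)+1))) ≤ B ^ (1:ℝ) :=
            Real.rpow_le_rpow_of_exponent_le hb hexp
        _ = B := Real.rpow_one B
        _ ≤ max 1 B := le_max_right _ _
  have hYpos : (0:ℝ) < (T * e^2) ^ ((1:ℝ)/((j:ℝ)+1)) * ((N * (j:ℝ)) / L^2) ^ ((j:ℝ)/((j:ℝ)+1)) :=
    mul_pos (Real.rpow_pos_of_pos hx0 _) (Real.rpow_pos_of_pos hV0 _)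
  have hstep1 : (1 / max 1 B) * ((T * e^2) ^ ((1:ℝ)/((j:ℝ)+1)) * ((N * (j:ℝ)) / L^2) ^ ((j:ℝ)/((j:ℝ)+1)))
      ≤ (T * e^2 / B^2) ^ ((1:ℝ)/(j+1)) * ((N * j) / L^2) ^ ((j:ℝ)/(j+1)) := by
    have hxr : (T * e^2 / B^2) ^ ((1:ℝ)/((j:ℝ)+1))
        = (T * e^2) ^ ((1:ℝ)/((j:ℝ)+1)) / (B^2) ^ ((1:ℝ)/((j:ℝ)+1)) :=
      Real.div_rpow hx0.le (sq_nonneg B) _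
    have hBr0 : (0:ℝ) < (B^2) ^ ((1:ℝ)/((j:ℝ)+1)) := Real.rpow_pos_of_pos (pow_pos hB 2) _
    rw [hxr]
    calc (1 / max 1 B) * ((T * e^2) ^ ((1:ℝ)/((j:ℝ)+1)) * ((N * (j:ℝ)) / L^2) ^ ((j:ℝ)/((j:ℝ)+1)))
        = ((T * e^2) ^ ((1:ℝ)/((j:ℝ)+1)) * ((N * (j:ℝ)) / L^2) ^ ((j:ℝ)/((j:ℝ)+1))) / max 1 B := by
          ring
      _ ≤ ((T * e^2) ^ ((1:ℝ)/((j:ℝ)+1)) * ((N * (j:ℝ)) / L^2) ^ ((j:ℝ)/((j:ℝ)+1))) / (B^2) ^ ((1:ℝ)/((j:ℝ)+1)) :=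
          (div_le_div_iff_of_pos_left hYpos hM0 hBr0).mpr hBr
      _ = (T * e^2) ^ ((1:ℝ)/((j:ℝ)+1)) / (B^2) ^ ((1:ℝ)/((j:ℝ)+1)) * ((N * (j:ℝ)) / L^2) ^ ((j:ℝ)/((j:ℝ)+1)) := by
          ring
  constructor
  · refine le_trans ?_ hstep1
    exact mul_le_mul_of_nonneg_left hY1 (le_of_lt (div_pos one_pos hM0))
  · -- log bound
    have hvV : 2*N/L^2 ≤ (N * (j:ℝ))/L^2 := by
      apply (div_le_div_iff_of_pos_right (pow_pos hL0 2)).mpr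
      nlinarith
    have hv0 : (0:ℝ) < 2*N/L^2 := div_pos (by linarith) (pow_pos hL0 2)
    have hmono : (T * e^2 / B^2) ^ ((1:ℝ)/((j:ℝ)+1)) * (2*N/L^2) ^ ((j:ℝ)/((j:ℝ)+1))
        ≤ (T * e^2 / B^2) ^ ((1:ℝ)/(j+1)) * ((N * j) / L^2) ^ ((j:ℝ)/(j+1)) :=
      mul_le_mul_of_nonneg_left (Real.rpow_le_rpow hv0.le hvV hs0) (Real.rpow_nonneg hu0.le _)
    have hv_low : 2/c*lg ≤ 2*N/L^2 := by
      have h2 : 1/c ≤ K*lg := by nlinarith [mul_nonneg (le_trans zero_le_one hK1 : (0:ℝ) ≤ K) (by linarith : (0:ℝ) ≤ lg - 1)]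
      have h3 : 2/c*lg ≤ 2*(K*lg^2) := by
        have hh := mul_le_mul_of_nonneg_right h2 hlg0.le
        have e1 : 2/c*lg = 2*(1/c*lg) := by ring
        have e2 : (K*lg)*lg = K*lg^2 := by ring
        rw [e2] at hh
        linarith
      calc 2/c*lg ≤ 2*(K*lg^2) := h3
        _ ≤ 2*(N/L^2) := by linarith [hNL2]
        _ = 2*N/L^2 := by ring
    have hg0 : (0:ℝ) ≤ 2/c*lg := by positivity
    rcases le_total (T*e^2/B^2) (2*N/L^2) with huv|huv
    · -- u ≤ v : cube root route
      have hfact : ∀ w : ℝ, (T*e^2/B^2) ^ w * (2*N/L^2) ^ (1 - w) = (2*N/L^2) * ((T*e^2/B^2)/(2*N/L^2)) ^ w := by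
        intro w
        have hne := (Real.rpow_pos_of_pos hv0 w).ne'
        rw [Real.div_rpow hu0.le hv0.le, Real.rpow_sub hv0, Real.rpow_one]
        field_simp
      have hx2' : 2*e^2 ≤ T*e^2 := by nlinarith [sq_nonneg e]
      have hu' : 2*e^2/B^2 ≤ T*e^2/B^2 := (div_le_div_iff_of_pos_right (pow_pos hB 2)).mpr hx2'
      have hv' : 2*(K*lg^2) ≤ 2*N/L^2 := by
        calc 2*(K*lg^2) ≤ 2*(N/L^2) := by linarith [hNL2]
          _ = 2*N/L^2 := by ring
      have hKlg0 : (0:ℝ) ≤ 2*(K*lg^2) :=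
        mul_nonneg zero_le_two (mul_nonneg (by linarith) (sq_nonneg lg))
      have h8 : (2*e^2/B^2)*(2*(K*lg^2))^2 ≤ (T*e^2/B^2)*(2*N/L^2)^2 :=
        mul_le_mul hu' (pow_le_pow_left₀ hKlg0 hv' 2) (pow_nonneg hKlg0 2) hu0.le
      have hcube : (2/c*lg)^3 ≤ (T*e^2/B^2)*(2*N/L^2)^2 := by
        have hA1 : e^2*(B^2/c^3)*lg^4 ≤ e^2*K^2*lg^4 :=
          mul_le_mul_of_nonneg_right (mul_le_mul_of_nonneg_left hKB (sq_nonneg e))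
            (pow_nonneg hlg0.le 4)
        have hBq : lg^3/c^3 ≤ (e^2*lg)*(lg^3/c^3) :=
          le_mul_of_one_le_left (div_nonneg (pow_nonneg hlg0.le 3) (pow_nonneg hc.le 3)) hεlg
        have hid : (e^2*lg)*(lg^3/c^3) = e^2*(B^2/c^3)*lg^4/B^2 := by
          field_simp
        have hC : lg^3/c^3 ≤ e^2*K^2*lg^4/B^2 := by
          calc lg^3/c^3 ≤ (e^2*lg)*(lg^3/c^3) := hBq
            _ = e^2*(B^2/c^3)*lg^4/B^2 := hid
            _ ≤ e^2*K^2*lg^4/B^2 := (div_le_div_iff_of_pos_right (pow_pos hB 2)).mpr hA1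
        calc (2/c*lg)^3 = 8*(lg^3/c^3) := by ring
          _ ≤ 8*(e^2*K^2*lg^4/B^2) := by linarith
          _ = (2*e^2/B^2)*(2*(K*lg^2))^2 := by ring
          _ ≤ (T*e^2/B^2)*(2*N/L^2)^2 := h8
      have h13 : 2/c*lg ≤ ((T*e^2/B^2)*(2*N/L^2)^2) ^ ((1:ℝ)/3) := by
        have e1 : (((2/c*lg)^(3:ℕ) : ℝ)) ^ ((1:ℝ)/3) = 2/c*lg := by
          rw [← Real.rpow_natCast (2/c*lg) 3, ← Real.rpow_mul hg0]
          norm_num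
        calc 2/c*lg = (((2/c*lg)^(3:ℕ) : ℝ)) ^ ((1:ℝ)/3) := e1.symm
          _ ≤ ((T*e^2/B^2)*(2*N/L^2)^2) ^ ((1:ℝ)/3) :=
              Real.rpow_le_rpow (pow_nonneg hg0 3) hcube (by norm_num)
      have huv1 : (T*e^2/B^2)/(2*N/L^2) ≤ 1 := (div_le_one hv0).mpr huv
      have huvp : (0:ℝ) < (T*e^2/B^2)/(2*N/L^2) := div_pos hu0 hv0
      have hr13 : (1:ℝ)/((j:ℝ)+1) ≤ 1/3 := by
        rw [div_le_div_iff₀ (by positivity) (by norm_num)]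
        linarith
      have hss : ((j:ℝ)/((j:ℝ)+1)) = 1 - (1:ℝ)/((j:ℝ)+1) := by
        field_simp
        ring
      have e13 : ((T*e^2/B^2)*(2*N/L^2)^2) ^ ((1:ℝ)/3)
          = (2*N/L^2) * ((T*e^2/B^2)/(2*N/L^2)) ^ ((1:ℝ)/3) := by
        rw [← hfact (1/3)]
        rw [Real.mul_rpow hu0.le (sq_nonneg _), ← Real.rpow_natCast (2*N/L^2) 2,
          ← Real.rpow_mul hv0.le]
        norm_num
      have hfin : ((T*e^2/B^2)*(2*N/L^2)^2) ^ ((1:ℝ)/3)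
          ≤ (T*e^2/B^2) ^ ((1:ℝ)/((j:ℝ)+1)) * (2*N/L^2) ^ ((j:ℝ)/((j:ℝ)+1)) := by
        calc ((T*e^2/B^2)*(2*N/L^2)^2) ^ ((1:ℝ)/3)
            = (2*N/L^2) * ((T*e^2/B^2)/(2*N/L^2)) ^ ((1:ℝ)/3) := e13
          _ ≤ (2*N/L^2) * ((T*e^2/B^2)/(2*N/L^2)) ^ ((1:ℝ)/((j:ℝ)+1)) :=
              mul_le_mul_of_nonneg_left
                (Real.rpow_le_rpow_of_exponent_ge huvp huv1 hr13) hv0.le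
          _ = (T*e^2/B^2) ^ ((1:ℝ)/((j:ℝ)+1)) * (2*N/L^2) ^ (1 - (1:ℝ)/((j:ℝ)+1)) :=
              (hfact _).symm
          _ = (T*e^2/B^2) ^ ((1:ℝ)/((j:ℝ)+1)) * (2*N/L^2) ^ ((j:ℝ)/((j:ℝ)+1)) := by
              rw [← hss]
      exact le_trans (le_trans h13 hfin) hmono
    · -- v ≤ u
      have hvv : (2*N/L^2) ^ ((1:ℝ)/((j:ℝ)+1)) * (2*N/L^2) ^ ((j:ℝ)/((j:ℝ)+1)) = 2*N/L^2 := by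
        rw [← Real.rpow_add hv0]
        rw [show (1:ℝ)/((j:ℝ)+1) + (j:ℝ)/((j:ℝ)+1) = 1 by field_simp; ring]
        exact Real.rpow_one _
      calc 2/c*lg ≤ 2*N/L^2 := hv_low
        _ = (2*N/L^2) ^ ((1:ℝ)/((j:ℝ)+1)) * (2*N/L^2) ^ ((j:ℝ)/((j:ℝ)+1)) := hvv.symm
        _ ≤ (T*e^2/B^2) ^ ((1:ℝ)/((j:ℝ)+1)) * (2*N/L^2) ^ ((j:ℝ)/((j:ℝ)+1)) :=
            mul_le_mul_of_nonneg_right (Real.rpow_le_rpow hv0.le huv hr0.le)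
              (Real.rpow_nonneg hv0.le _)
        _ ≤ _ := hmono


set_option maxHeartbeats 1000000 in
private lemma core_bound {c B D K N L e T : ℝ} (j : ℕ) (hj : 2 ≤ j)
    (hc : 0 < c) (hB : 0 < B) (hD : 2/c + 1 ≤ D)
    (hKD : D^2 ≤ K) (hKB : B^2/c^3 ≤ K^2) (hKc : 1/c ≤ K)
    (hL : 3 ≤ L) (hlg : 1 ≤ Real.log L)
    (he0 : 0 < e) (he1 : e < 1) (hT : 2 ≤ T) (hN0 : 0 < N)
    (hub : T < N / L^2 * e^4)
    (hNK : K * (L^2 * Real.log L^2) ≤ N)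
    (hεlg : 1 ≤ e^2 * Real.log L) :
    (1 / max 1 B) / 2 * (T / e) + 1 / c * Real.log L ≤
      min ((T * e^2) ^ ((1:ℝ)/j) * (N / L) ^ (((j:ℝ)-1)/j))
          ((T * e^2 / B^2) ^ ((1:ℝ)/(j+1)) * ((N * j) / L^2) ^ ((j:ℝ)/(j+1))) := by
  have hL0 : (0:ℝ) < L := by linarith
  have hL1 : (1:ℝ) ≤ L := by linarith
  set lg := Real.log L with hlgdef
  have hlg0 : (0:ℝ) < lg := by linarith
  have hT0 : (0:ℝ) < T := by linarith
  have he1' : e ≤ 1 := he1.le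
  have hx0 : (0:ℝ) < T * e^2 := by positivity
  have h2c : (0:ℝ) < 2/c := by positivity
  have hD1 : (1:ℝ) ≤ D := by linarith
  have hK1 : (1:ℝ) ≤ K := by nlinarith
  have hK0 : (0:ℝ) < K := by linarith
  have hM : (1:ℝ) ≤ max 1 B := le_max_left _ _
  have hM0 : (0:ℝ) < max 1 B := lt_of_lt_of_le one_pos hM
  have hm'0 : (0:ℝ) < 1 / max 1 B := by positivity
  have hm'1 : 1 / max 1 B ≤ 1 := by rw [div_le_one hM0]; exact hM
  have hub' : T * L^2 ≤ N * e^4 := by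
    rw [div_mul_eq_mul_div] at hub
    exact ((lt_div_iff₀ (pow_pos hL0 2)).mp hub).le
  have hxL : T * e^2 * L^2 ≤ N * e^6 := by
    nlinarith [mul_le_mul_of_nonneg_right hub' (sq_nonneg e)]
  have hlgL : lg ≤ L := by
    have := Real.log_le_sub_one_of_pos hL0
    linarith
  have hx2 : 2 * e^2 ≤ T * e^2 := by nlinarith [sq_nonneg e]
  have heL : 1 ≤ e^2 * L := by nlinarith [mul_nonneg (sq_nonneg e) (sub_nonneg.mpr hlgL)]
  have hx2L : 2 / L ≤ T * e^2 := by
    rw [div_le_iff₀ hL0]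
    nlinarith [heL, mul_le_mul_of_nonneg_right hT (mul_nonneg (sq_nonneg e) hL0.le)]
  have hNL1 : T * L / e^4 ≤ N / L := by
    rw [div_le_div_iff₀ (by positivity) hL0]
    nlinarith [hub']
  have hNL2 : K * (L * lg^2) ≤ N / L := by
    rw [le_div_iff₀ hL0]
    nlinarith [hNK]
  have hNL2' : K * lg^2 ≤ N / L^2 := by
    rw [le_div_iff₀ (pow_pos hL0 2)]
    nlinarith [hNK]
  have hA := sideA j hj he0 he1' hT0 hL0 hL1 hD1 hK0 hlg hN0 hNL1 hKD hNL2 hx2L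
  have hBB := sideB j hj hc hB hK1 hKB hKc hL0 hlg he0 he1' hT hN0 hxL hNL2' hεlg
  have hTe0 : (0:ℝ) ≤ T/e := div_nonneg hT0.le he0.le
  refine le_min ?_ ?_
  · have hsq : (1:ℝ) ≤ Real.sqrt L := Real.one_le_sqrt.mpr hL1
    have e1 : (1 / max 1 B)/2*(T/e) ≤ 1/2*(Real.sqrt L*(T/e)) := by
      have := mul_le_mul_of_nonneg_right (le_trans hm'1 hsq) hTe0
      linarith
    have e2 : 1/c*lg ≤ 1/2*(D*lg) := by
      have h2c' : 2/c ≤ D := by linarith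
      have hh := mul_le_mul_of_nonneg_right h2c' hlg0.le
      have hdd : 1/c*lg = 1/2*(2/c*lg) := by ring
      rw [hdd]
      linarith
    linarith [hA.1, hA.2, e1, e2]
  · have e1 : (1 / max 1 B)/2*(T/e) ≤ 1/2*((1 / max 1 B)*(3/2*(T/e))) := by
      have h0 : 0 ≤ (1 / max 1 B)*(T/e) := mul_nonneg hm'0.le hTe0
      nlinarith [h0]
    have hdd : 1/c*lg = 1/2*(2/c*lg) := by ring
    rw [hdd]
    linarith [hBB.1, hBB.2, e1]

open MeasureTheory Filter Finset

set_option maxHeartbeats 1000000 in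
/-- Summing the tail bounds for the higher-order Hoeffding terms: under
`l log² l ≪ n/l`, `ε ≫ log^{−1/2}(l)` and `t < (n/l²) ε⁴`, the sum of the `l−1`
exponential tail terms is eventually dominated by `exp(−c₂ t/ε)`. -/
theorem higher_order_tail_sum_bound
    {Ω : Type*} [MeasurableSpace Ω] (P : Measure Ω) [IsProbabilityMeasure P]
    (n l : ℕ → ℕ) (ε t : ℕ → ℝ) (c B : ℝ) (hc : 0 < c) (hB : 0 < B)
    (T : ℕ → ℕ → Ω → ℝ) (s : ℕ → ℕ → ℝ)
    (hn : ∀ i, 0 < n i)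
    (hl : Tendsto l atTop atTop)
    (hll : Tendsto (fun i => ((l i : ℝ) ^ 2 * (Real.log (l i)) ^ 2) / (n i : ℝ))
      atTop (nhds 0))
    (hε : ∀ i, ε i ∈ Set.Ioo (0 : ℝ) 1)
    (hεlog : Tendsto (fun i => ε i * Real.sqrt (Real.log (l i))) atTop atTop)
    (ht : ∀ i, 2 ≤ t i)
    (htub : ∀ i, t i < ((n i : ℝ) / (l i : ℝ) ^ 2) * ε i ^ 4)
    (htail : ∀ i, ∀ j : ℕ, 2 ≤ j → j ≤ l i →
      (P {ω | s i j ≤ |T i j ω|}).toReal ≤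
        Real.exp (-(c * min
          ((t i * ε i ^ 2) ^ ((1 : ℝ) / j) * ((n i : ℝ) / (l i : ℝ)) ^ (((j : ℝ) - 1) / j))
          ((t i * ε i ^ 2 / B ^ 2) ^ ((1 : ℝ) / (j + 1)) *
            (((n i : ℝ) * j) / (l i : ℝ) ^ 2) ^ ((j : ℝ) / (j + 1)))))) :
    ∃ c₂ : ℝ, 0 < c₂ ∧ ∀ᶠ i in atTop,
      ∑ j ∈ Finset.Icc 2 (l i), (P {ω | s i j ≤ |T i j ω|}).toReal
        ≤ Real.exp (-(c₂ * t i / ε i)) := by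
  have hM0 : (0:ℝ) < max 1 B := lt_of_lt_of_le one_pos (le_max_left 1 B)
  set D : ℝ := 2/c + 1 with hDdef
  set K : ℝ := D^2 + B^2/c^3 + 1/c + 1 with hKdef
  have hc' : (0:ℝ) < 1/c := div_pos one_pos hc
  have hBc : (0:ℝ) ≤ B^2/c^3 := div_nonneg (sq_nonneg B) (le_of_lt (pow_pos hc 3))
  have h2c1 : (2:ℝ)/c = 2*(1/c) := by ring
  have hD1 : (1:ℝ) ≤ D := by rw [hDdef, h2c1]; linarith
  have hK1 : (1:ℝ) ≤ K := by rw [hKdef]; linarith [sq_nonneg D, hBc, hc']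
  have hK0 : (0:ℝ) < K := by linarith
  have hKD : D^2 ≤ K := by rw [hKdef]; linarith [hBc, hc']
  have hKge : B^2/c^3 ≤ K := by rw [hKdef]; linarith [sq_nonneg D, hc']
  have hKB : B^2/c^3 ≤ K^2 := by
    nlinarith [hKge, hK1, mul_nonneg (le_trans zero_le_one hK1) (sub_nonneg.mpr hK1)]
  have hKc : 1/c ≤ K := by rw [hKdef]; linarith [sq_nonneg D, hBc]
  refine ⟨c * (1 / max 1 B) / 2, by positivity, ?_⟩
  have hlR : Tendsto (fun i => (l i : ℝ)) atTop atTop := tendsto_natCast_atTop_atTop.comp hl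
  have hlgt : Tendsto (fun i => Real.log (l i)) atTop atTop := Real.tendsto_log_atTop.comp hlR
  filter_upwards [hlR.eventually_ge_atTop 3, hlgt.eventually_ge_atTop 1,
    hεlog.eventually_ge_atTop 1,
    hll.eventually_lt_const (show (0:ℝ) < 1/K by positivity)] with i hL3 hlg1 hes hKn
  have hN0 : (0:ℝ) < (n i : ℝ) := by exact_mod_cast hn i
  have hL0 : (0:ℝ) < (l i : ℝ) := by linarith
  have hNK : K * ((l i:ℝ)^2 * Real.log (l i) ^ 2) ≤ (n i : ℝ) := by
    rw [div_lt_div_iff₀ hN0 hK0] at hKn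
    nlinarith [hKn]
  have hεlg2 : 1 ≤ (ε i)^2 * Real.log (l i) := by
    have hlgnn : (0:ℝ) ≤ Real.log (l i) := by linarith
    have h1 := mul_le_mul hes hes zero_le_one (le_trans zero_le_one hes)
    rw [show (ε i * Real.sqrt (Real.log (l i))) * (ε i * Real.sqrt (Real.log (l i)))
        = (ε i)^2 * (Real.sqrt (Real.log (l i)))^2 by ring] at h1
    rw [Real.sq_sqrt hlgnn] at h1
    linarith
  have hcore : ∀ j : ℕ, 2 ≤ j → j ≤ l i →
      (1 / max 1 B) / 2 * (t i / ε i) + 1 / c * Real.log (l i) ≤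
        min ((t i * ε i ^ 2) ^ ((1 : ℝ) / j) * ((n i : ℝ) / (l i : ℝ)) ^ (((j : ℝ) - 1) / j))
          ((t i * ε i ^ 2 / B ^ 2) ^ ((1 : ℝ) / (j + 1)) *
            (((n i : ℝ) * j) / (l i : ℝ) ^ 2) ^ ((j : ℝ) / (j + 1))) := by
    intro j hj2 hjl
    exact core_bound j hj2 hc hB hDdef.ge hKD hKB hKc hL3 hlg1 (hε i).1 (hε i).2
      (ht i) hN0 (htub i) hNK hεlg2
  have hE0 : (0:ℝ) ≤ Real.exp (-(c * (1 / max 1 B) / 2 * t i / ε i)) := (Real.exp_pos _).le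
  calc ∑ j ∈ Finset.Icc 2 (l i), (P {ω | s i j ≤ |T i j ω|}).toReal
      ≤ ∑ _j ∈ Finset.Icc 2 (l i),
          Real.exp (-(c * (1 / max 1 B) / 2 * t i / ε i)) / (l i : ℝ) := by
        apply Finset.sum_le_sum
        intro j hj
        obtain ⟨hj2, hjl⟩ := Finset.mem_Icc.mp hj
        refine le_trans (htail i j hj2 hjl) ?_
        have hmin := hcore j hj2 hjl
        have hmul := mul_le_mul_of_nonneg_left hmin hc.le
        have hrw : c * ((1 / max 1 B) / 2 * (t i / ε i) + 1 / c * Real.log (l i))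
            = c * (1 / max 1 B) / 2 * t i / ε i + Real.log (l i) := by
          field_simp
        rw [hrw] at hmul
        have hexp : Real.exp (-(c * min
              ((t i * ε i ^ 2) ^ ((1 : ℝ) / j) * ((n i : ℝ) / (l i : ℝ)) ^ (((j : ℝ) - 1) / j))
              ((t i * ε i ^ 2 / B ^ 2) ^ ((1 : ℝ) / (j + 1)) *
                (((n i : ℝ) * j) / (l i : ℝ) ^ 2) ^ ((j : ℝ) / (j + 1)))))
            ≤ Real.exp (-(c * (1 / max 1 B) / 2 * t i / ε i) + -(Real.log (l i))) := by
          apply Real.exp_le_exp.mpr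
          linarith
        refine le_trans hexp ?_
        have hel : Real.exp (-Real.log (l i)) = ((l i:ℝ))⁻¹ := by
          rw [Real.exp_neg, Real.exp_log hL0]
        rw [Real.exp_add, hel]
        exact le_of_eq (div_eq_mul_inv _ _).symm
    _ = ((l i + 1 - 2 : ℕ) : ℝ) *
          (Real.exp (-(c * (1 / max 1 B) / 2 * t i / ε i)) / (l i : ℝ)) := by
        rw [Finset.sum_const, Nat.card_Icc, nsmul_eq_mul]
    _ ≤ Real.exp (-(c * (1 / max 1 B) / 2 * t i / ε i)) := by
        have hcard : ((l i + 1 - 2 : ℕ) : ℝ) ≤ (l i : ℝ) := by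
          have h : l i + 1 - 2 ≤ l i := by omega
          exact_mod_cast h
        calc ((l i + 1 - 2 : ℕ) : ℝ) *
              (Real.exp (-(c * (1 / max 1 B) / 2 * t i / ε i)) / (l i : ℝ))
            ≤ (l i : ℝ) * (Real.exp (-(c * (1 / max 1 B) / 2 * t i / ε i)) / (l i : ℝ)) :=
              mul_le_mul_of_nonneg_right hcard (div_nonneg hE0 hL0.le)
          _ = Real.exp (-(c * (1 / max 1 B) / 2 * t i / ε i)) := by
              rw [mul_comm, div_mul_cancel₀ _ hL0.ne']
end
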